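/- arXiv:1705.10528 — 3 statements merged into one kernel-verified Lean document; each statement's English description precedes it below -/
import Mathlib

section
/- For any function f : S → ℝ and any two policies π' and π with π(a|s) > 0 for all s, a, the performance difference is bounded on both sides: L_{π,f}(π')/(1-γ) - (2γ ε_f^{π'}/(1-γ)²)·E_{s∼d^π}[D_TV(π'‖π)[s]] ≤ J(π') - J(π) ≤ L_{π,f}(π')/(1-γ) + (2γ ε_f^{π'}/(1-γ)²)·E_{s∼d^π}[D_TV(π'‖π)[s]]. Moreover, when π' = π all three expressions are identically zero. -/
open BigOperators Finset Matrix

noncomputable section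

variable {S A : Type*}

/-- Policy transition matrix (column-stochastic): entry `(s', s)` is
`P_pol(s'|s) = ∑ a, P(s'|s,a) pol(a|s)`. -/
def Pmat [Fintype A] (P : S → A → S → ℝ) (pol : S → A → ℝ) : Matrix S S ℝ :=
  fun s' s => ∑ a, P s a s' * pol s a

/-- Discounted future state distribution `d^π = (1-γ) ∑_t γ^t P_π^t μ`. -/
def dFut [Fintype S] [DecidableEq S] [Fintype A] (γ : ℝ) (P : S → A → S → ℝ)
    (μ : S → ℝ) (pol : S → A → ℝ) : S → ℝ :=
  fun s => (1 - γ) * ∑' t : ℕ, γ ^ t * ((Pmat P pol ^ t) *ᵥ μ) s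

/-- Discounted return `J(π)` (also used as the cost return `J_C(π)` with a cost `C`
in place of the reward `R`). -/
def Jret [Fintype S] [DecidableEq S] [Fintype A] (γ : ℝ) (P : S → A → S → ℝ)
    (R : S → A → S → ℝ) (μ : S → ℝ) (pol : S → A → ℝ) : ℝ :=
  (1 / (1 - γ)) * ∑ s, dFut γ P μ pol s * (∑ a, pol s a * (∑ s', P s a s' * R s a s'))

/-- Total variational divergence between action distributions at state `s`. -/
def DTV [Fintype A] (pol' pol : S → A → ℝ) (s : S) : ℝ :=
  (1 / 2) * ∑ a, |pol' s a - pol s a|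

/-- Kullback–Leibler divergence between action distributions at state `s`. -/
def DKL [Fintype A] (pol' pol : S → A → ℝ) (s : S) : ℝ :=
  ∑ a, pol' s a * Real.log (pol' s a / pol s a)

/-- Advantage function `A^π(s,a) = Q^π(s,a) - V^π(s)` built from a value function `V`
(also used for cost advantages with a cost `C` in place of `R`). -/
def Adv [Fintype S] (γ : ℝ) (P : S → A → S → ℝ) (R : S → A → S → ℝ)
    (V : S → ℝ) (s : S) (a : A) : ℝ :=
  (∑ s', P s a s' * (R s a s' + γ * V s')) - V s

/-- `ε_f^{π'} = max_s |E_{a∼π'(·|s), s'∼P}[δ_f(s,a,s')]|` where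
`δ_f(s,a,s') = R(s,a,s') + γ f(s') - f(s)`. -/
def epsF [Fintype S] [Fintype A] (γ : ℝ) (P : S → A → S → ℝ) (R : S → A → S → ℝ)
    (f : S → ℝ) (pol' : S → A → ℝ) : ℝ :=
  ⨆ s, |∑ a, pol' s a * (∑ s', P s a s' * (R s a s' + γ * f s' - f s))|

/-- Surrogate `L_{π,f}(π') = E_{s∼d^π, a∼π, s'∼P}[(π'(a|s)/π(a|s) - 1) δ_f(s,a,s')]`. -/
def Lsurr [Fintype S] [DecidableEq S] [Fintype A] (γ : ℝ) (P : S → A → S → ℝ)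
    (R : S → A → S → ℝ) (μ : S → ℝ) (f : S → ℝ) (pol pol' : S → A → ℝ) : ℝ :=
  ∑ s, dFut γ P μ pol s * (∑ a, pol s a * (∑ s', P s a s' *
    ((pol' s a / pol s a - 1) * (R s a s' + γ * f s' - f s))))


set_option linter.unusedSectionVars false
set_option linter.unusedVariables false
section helpers
variable [Fintype S] [DecidableEq S] [Fintype A]


lemma mulVec_apply' (M : Matrix S S ℝ) (v : S → ℝ) (s : S) :
    (M *ᵥ v) s = ∑ s2, M s s2 * v s2 := by
  simp [Matrix.mulVec, dotProduct]

lemma Pmat_nonneg (P : S → A → S → ℝ) (hP0 : ∀ s a s', 0 ≤ P s a s')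
    (ρ : S → A → ℝ) (hρ0 : ∀ s a, 0 ≤ ρ s a) (s' s : S) : 0 ≤ Pmat P ρ s' s :=
  Finset.sum_nonneg fun a _ => mul_nonneg (hP0 _ _ _) (hρ0 _ _)

lemma Pmat_colsum (P : S → A → S → ℝ) (hP1 : ∀ s a, (∑ s', P s a s') = 1)
    (ρ : S → A → ℝ) (hρ1 : ∀ s, (∑ a, ρ s a) = 1) (s : S) :
    ∑ s', Pmat P ρ s' s = 1 := by
  calc ∑ s', Pmat P ρ s' s = ∑ a, ∑ s', P s a s' * ρ s a := Finset.sum_comm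
  _ = ∑ a, ρ s a := by
      refine Finset.sum_congr rfl fun a _ => ?_
      rw [← Finset.sum_mul, hP1, one_mul]
  _ = 1 := hρ1 s

lemma stoch_mulVec_sum (M : Matrix S S ℝ) (hcol : ∀ s, ∑ s', M s' s = 1) (v : S → ℝ) :
    ∑ s, (M *ᵥ v) s = ∑ s, v s := by
  simp_rw [mulVec_apply']
  rw [Finset.sum_comm]
  refine Finset.sum_congr rfl fun s2 _ => ?_
  rw [← Finset.sum_mul, hcol, one_mul]

lemma iter_nonneg (P : S → A → S → ℝ) (hP0 : ∀ s a s', 0 ≤ P s a s')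
    (μ : S → ℝ) (hμ0 : ∀ s, 0 ≤ μ s)
    (ρ : S → A → ℝ) (hρ0 : ∀ s a, 0 ≤ ρ s a) (t : ℕ) (s : S) :
    0 ≤ ((Pmat P ρ ^ t) *ᵥ μ) s := by
  induction t generalizing s with
  | zero => simpa using hμ0 s
  | succ t ih =>
      rw [pow_succ', ← Matrix.mulVec_mulVec, mulVec_apply']
      exact Finset.sum_nonneg fun s2 _ =>
        mul_nonneg (Pmat_nonneg P hP0 ρ hρ0 s s2) (ih s2)

lemma iter_sum (P : S → A → S → ℝ) (hP1 : ∀ s a, (∑ s', P s a s') = 1)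
    (μ : S → ℝ) (hμ1 : (∑ s, μ s) = 1)
    (ρ : S → A → ℝ) (hρ1 : ∀ s, (∑ a, ρ s a) = 1) (t : ℕ) :
    ∑ s, ((Pmat P ρ ^ t) *ᵥ μ) s = 1 := by
  induction t with
  | zero => simpa using hμ1
  | succ t ih =>
      simp_rw [pow_succ', ← Matrix.mulVec_mulVec]
      rw [stoch_mulVec_sum _ (Pmat_colsum P hP1 ρ hρ1)]
      exact ih

lemma summable_term (γ : ℝ) (hγ0 : 0 ≤ γ) (hγ1 : γ < 1)
    (P : S → A → S → ℝ) (hP0 : ∀ s a s', 0 ≤ P s a s') (hP1 : ∀ s a, (∑ s', P s a s') = 1)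
    (μ : S → ℝ) (hμ0 : ∀ s, 0 ≤ μ s) (hμ1 : (∑ s, μ s) = 1)
    (ρ : S → A → ℝ) (hρ0 : ∀ s a, 0 ≤ ρ s a) (hρ1 : ∀ s, (∑ a, ρ s a) = 1) (s : S) :
    Summable (fun t : ℕ => γ ^ t * ((Pmat P ρ ^ t) *ᵥ μ) s) := by
  refine Summable.of_nonneg_of_le
    (fun t => mul_nonneg (pow_nonneg hγ0 t) (iter_nonneg P hP0 μ hμ0 ρ hρ0 t s))
    (fun t => ?_) (summable_geometric_of_lt_one hγ0 hγ1)
  have h1 : ((Pmat P ρ ^ t) *ᵥ μ) s ≤ 1 := by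
    calc ((Pmat P ρ ^ t) *ᵥ μ) s ≤ ∑ s', ((Pmat P ρ ^ t) *ᵥ μ) s' :=
          Finset.single_le_sum (fun s' _ => iter_nonneg P hP0 μ hμ0 ρ hρ0 t s')
            (Finset.mem_univ s)
    _ = 1 := iter_sum P hP1 μ hμ1 ρ hρ1 t
  calc γ ^ t * ((Pmat P ρ ^ t) *ᵥ μ) s ≤ γ ^ t * 1 :=
        mul_le_mul_of_nonneg_left h1 (pow_nonneg hγ0 t)
  _ = γ ^ t := mul_one _

lemma dFut_nonneg (γ : ℝ) (hγ0 : 0 ≤ γ) (hγ1 : γ < 1)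
    (P : S → A → S → ℝ) (hP0 : ∀ s a s', 0 ≤ P s a s')
    (μ : S → ℝ) (hμ0 : ∀ s, 0 ≤ μ s)
    (ρ : S → A → ℝ) (hρ0 : ∀ s a, 0 ≤ ρ s a) (s : S) :
    0 ≤ dFut γ P μ ρ s := by
  refine mul_nonneg (by linarith) (tsum_nonneg fun t =>
    mul_nonneg (pow_nonneg hγ0 t) (iter_nonneg P hP0 μ hμ0 ρ hρ0 t s))

lemma dFut_rec (γ : ℝ) (hγ0 : 0 ≤ γ) (hγ1 : γ < 1)
    (P : S → A → S → ℝ) (hP0 : ∀ s a s', 0 ≤ P s a s') (hP1 : ∀ s a, (∑ s', P s a s') = 1)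
    (μ : S → ℝ) (hμ0 : ∀ s, 0 ≤ μ s) (hμ1 : (∑ s, μ s) = 1)
    (ρ : S → A → ℝ) (hρ0 : ∀ s a, 0 ≤ ρ s a) (hρ1 : ∀ s, (∑ a, ρ s a) = 1) (s : S) :
    dFut γ P μ ρ s = (1 - γ) * μ s + γ * (Pmat P ρ *ᵥ dFut γ P μ ρ) s := by
  set M := Pmat P ρ with hM
  have hsum : ∀ s2, Summable (fun t : ℕ => γ ^ t * ((M ^ t) *ᵥ μ) s2) :=
    summable_term γ hγ0 hγ1 P hP0 hP1 μ hμ0 hμ1 ρ hρ0 hρ1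
  have h1 : (M *ᵥ dFut γ P μ ρ) s
      = (1 - γ) * ∑' t : ℕ, γ ^ t * ((M ^ (t + 1)) *ᵥ μ) s := by
    rw [mulVec_apply']
    have hterm : ∀ s2, M s s2 * dFut γ P μ ρ s2
        = (1 - γ) * ∑' t : ℕ, M s s2 * (γ ^ t * ((M ^ t) *ᵥ μ) s2) := by
      intro s2
      rw [tsum_mul_left]
      unfold dFut
      ring
    simp_rw [hterm]
    rw [← Finset.mul_sum]
    congr 1
    rw [← Summable.tsum_finsetSum (fun s2 _ => (hsum s2).mul_left (M s s2))]
    refine tsum_congr fun t => ?_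
    have : ∑ s2, M s s2 * (γ ^ t * ((M ^ t) *ᵥ μ) s2)
        = γ ^ t * ∑ s2, M s s2 * ((M ^ t) *ᵥ μ) s2 := by
      rw [Finset.mul_sum]; refine Finset.sum_congr rfl fun s2 _ => by ring
    rw [this, ← mulVec_apply', Matrix.mulVec_mulVec, ← pow_succ']
  have h2 : dFut γ P μ ρ s
      = (1 - γ) * μ s + γ * ((1 - γ) * ∑' t : ℕ, γ ^ t * ((M ^ (t + 1)) *ᵥ μ) s) := by
    unfold dFut
    rw [Summable.tsum_eq_zero_add (hsum s)]
    have h0 : γ ^ 0 * ((M ^ 0) *ᵥ μ) s = μ s := by simp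
    have hsucc : ∀ t : ℕ, γ ^ (t + 1) * ((M ^ (t + 1)) *ᵥ μ) s
        = γ * (γ ^ t * ((M ^ (t + 1)) *ᵥ μ) s) := fun t => by ring
    simp_rw [h0, hsucc]
    rw [tsum_mul_left]
    ring
  rw [h2, h1]
lemma key_identity (γ : ℝ) (hγ1 : γ < 1)
    (P : S → A → S → ℝ) (hP1 : ∀ s a, (∑ s', P s a s') = 1)
    (μ : S → ℝ) (R : S → A → S → ℝ) (f : S → ℝ)
    (ρ : S → A → ℝ) (hρ1 : ∀ s, (∑ a, ρ s a) = 1)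
    (hrec : ∀ s, dFut γ P μ ρ s = (1 - γ) * μ s + γ * (Pmat P ρ *ᵥ dFut γ P μ ρ) s) :
    ∑ s, dFut γ P μ ρ s * (∑ a, ρ s a * ∑ s', P s a s' * (R s a s' + γ * f s' - f s))
      = (1 - γ) * Jret γ P R μ ρ - (1 - γ) * ∑ s, μ s * f s := by
  set d := dFut γ P μ ρ with hd
  have hinner : ∀ s, (∑ a, ρ s a * ∑ s', P s a s' * (R s a s' + γ * f s' - f s))
      = (∑ a, ρ s a * ∑ s', P s a s' * R s a s')
        + γ * (∑ a, ρ s a * ∑ s', P s a s' * f s') - f s := by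
    intro s
    have h1 : ∀ a, (∑ s', P s a s' * (R s a s' + γ * f s' - f s))
        = (∑ s', P s a s' * R s a s') + γ * (∑ s', P s a s' * f s') - f s := by
      intro a
      have : ∀ s', P s a s' * (R s a s' + γ * f s' - f s)
          = P s a s' * R s a s' + γ * (P s a s' * f s') - f s * P s a s' :=
        fun s' => by ring
      simp_rw [this]
      rw [Finset.sum_sub_distrib, Finset.sum_add_distrib, ← Finset.mul_sum,
        ← Finset.mul_sum, hP1, mul_one]
    simp_rw [h1]
    have : ∀ a, ρ s a * ((∑ s', P s a s' * R s a s')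
          + γ * (∑ s', P s a s' * f s') - f s)
        = ρ s a * (∑ s', P s a s' * R s a s')
          + γ * (ρ s a * (∑ s', P s a s' * f s')) - f s * ρ s a := fun a => by ring
    simp_rw [this]
    rw [Finset.sum_sub_distrib, Finset.sum_add_distrib, ← Finset.mul_sum,
      ← Finset.mul_sum, hρ1, mul_one]
  have hswap : ∑ s, d s * (∑ a, ρ s a * ∑ s', P s a s' * f s')
      = ∑ s', f s' * (Pmat P ρ *ᵥ d) s' := by
    have l1 : ∀ s, d s * (∑ a, ρ s a * ∑ s', P s a s' * f s')
        = ∑ a, ∑ s', d s * (ρ s a * (P s a s' * f s')) := by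
      intro s; rw [Finset.mul_sum]
      refine Finset.sum_congr rfl fun a _ => ?_
      rw [Finset.mul_sum, Finset.mul_sum]
    have r1 : ∀ s', f s' * (Pmat P ρ *ᵥ d) s'
        = ∑ s, ∑ a, d s * (ρ s a * (P s a s' * f s')) := by
      intro s'
      rw [mulVec_apply', Finset.mul_sum]
      refine Finset.sum_congr rfl fun s _ => ?_
      show f s' * (Pmat P ρ s' s * d s) = _
      simp only [Pmat]
      rw [Finset.sum_mul, Finset.mul_sum]
      exact Finset.sum_congr rfl fun a _ => by ring
    simp_rw [l1, r1]
    exact (Finset.sum_congr rfl fun s _ => Finset.sum_comm).trans Finset.sum_comm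
  have hrec' : ∀ s, γ * (Pmat P ρ *ᵥ d) s = d s - (1 - γ) * μ s := by
    intro s; have := hrec s; linarith
  have hgd : γ * ∑ s, d s * (∑ a, ρ s a * ∑ s', P s a s' * f s')
      = ∑ s, f s * d s - (1 - γ) * ∑ s, μ s * f s := by
    rw [hswap, Finset.mul_sum]
    have : ∀ s, γ * (f s * (Pmat P ρ *ᵥ d) s)
        = f s * d s - (1 - γ) * (μ s * f s) := by
      intro s
      calc γ * (f s * (Pmat P ρ *ᵥ d) s) = f s * (γ * (Pmat P ρ *ᵥ d) s) := by ring
      _ = f s * (d s - (1 - γ) * μ s) := by rw [hrec' s]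
      _ = f s * d s - (1 - γ) * (μ s * f s) := by ring
    simp_rw [this]
    rw [Finset.sum_sub_distrib, ← Finset.mul_sum]
  have hJ : (1 - γ) * Jret γ P R μ ρ
      = ∑ s, d s * (∑ a, ρ s a * (∑ s', P s a s' * R s a s')) := by
    have hne : (1 : ℝ) - γ ≠ 0 := by linarith
    unfold Jret
    rw [← hd, ← mul_assoc, mul_one_div_cancel hne, one_mul]
  simp_rw [hinner]
  have expand : ∀ s, d s * ((∑ a, ρ s a * ∑ s', P s a s' * R s a s')
        + γ * (∑ a, ρ s a * ∑ s', P s a s' * f s') - f s)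
      = d s * (∑ a, ρ s a * (∑ s', P s a s' * R s a s'))
        + γ * (d s * (∑ a, ρ s a * ∑ s', P s a s' * f s')) - f s * d s :=
    fun s => by ring
  simp_rw [expand]
  rw [Finset.sum_sub_distrib, Finset.sum_add_distrib, ← Finset.mul_sum, hJ]
  have := hgd
  rw [Finset.mul_sum] at this ⊢
  linarith [hgd]
lemma l1_bound (γ : ℝ) (hγ0 : 0 ≤ γ) (hγ1 : γ < 1)
    (P : S → A → S → ℝ) (hP0 : ∀ s a s', 0 ≤ P s a s')
    (hP1 : ∀ s a, (∑ s', P s a s') = 1)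
    (μ : S → ℝ) (pol pol' : S → A → ℝ)
    (hpol'0 : ∀ s a, 0 ≤ pol' s a) (hpol'1 : ∀ s, (∑ a, pol' s a) = 1)
    (hd0 : ∀ s, 0 ≤ dFut γ P μ pol s)
    (hrec : ∀ s, dFut γ P μ pol s
      = (1 - γ) * μ s + γ * (Pmat P pol *ᵥ dFut γ P μ pol) s)
    (hrec' : ∀ s, dFut γ P μ pol' s
      = (1 - γ) * μ s + γ * (Pmat P pol' *ᵥ dFut γ P μ pol') s) :
    (1 - γ) * ∑ s, |dFut γ P μ pol' s - dFut γ P μ pol s|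
      ≤ γ * ∑ s, dFut γ P μ pol s * (∑ a, |pol' s a - pol s a|) := by
  set d := dFut γ P μ pol with hd
  set d' := dFut γ P μ pol' with hd'
  set M := Pmat P pol with hMdef
  set M' := Pmat P pol' with hM'def
  set e : S → ℝ := fun s => d' s - d s with hedef
  set w : S → ℝ := fun s => ∑ s2, (M' s s2 - M s s2) * d s2 with hwdef
  have he : ∀ s, e s = γ * ((M' *ᵥ e) s + w s) := by
    intro s
    have hXe : (M' *ᵥ e) s = (M' *ᵥ d') s - (M' *ᵥ d) s := by
      rw [mulVec_apply', mulVec_apply', mulVec_apply', ← Finset.sum_sub_distrib]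
      exact Finset.sum_congr rfl fun s2 _ => by simp [hedef]; ring
    have hw : w s = (M' *ᵥ d) s - (M *ᵥ d) s := by
      rw [hwdef, mulVec_apply', mulVec_apply', ← Finset.sum_sub_distrib]
      exact Finset.sum_congr rfl fun s2 _ => by ring
    simp only [hedef]
    rw [hXe, hw]
    linarith [hrec s, hrec' s]
  have habs : ∑ s, |e s| ≤ γ * (∑ s, |(M' *ᵥ e) s| + ∑ s, |w s|) := by
    rw [← Finset.sum_add_distrib, Finset.mul_sum]
    refine Finset.sum_le_sum fun s _ => ?_
    rw [he s, abs_mul, abs_of_nonneg hγ0]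
    exact mul_le_mul_of_nonneg_left (abs_add_le _ _) hγ0
  have hMe : ∑ s, |(M' *ᵥ e) s| ≤ ∑ s, |e s| := by
    calc ∑ s, |(M' *ᵥ e) s| ≤ ∑ s, ∑ s2, M' s s2 * |e s2| := by
          refine Finset.sum_le_sum fun s _ => ?_
          rw [mulVec_apply']
          refine (Finset.abs_sum_le_sum_abs _ _).trans ?_
          refine Finset.sum_le_sum fun s2 _ => ?_
          rw [abs_mul, abs_of_nonneg (Pmat_nonneg P hP0 pol' hpol'0 s s2)]
      _ = ∑ s2, |e s2| := by
          rw [Finset.sum_comm]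
          refine Finset.sum_congr rfl fun s2 _ => ?_
          rw [← Finset.sum_mul, Pmat_colsum P hP1 pol' hpol'1 s2, one_mul]
  have hwb : ∑ s, |w s| ≤ ∑ s, d s * (∑ a, |pol' s a - pol s a|) := by
    calc ∑ s, |w s| ≤ ∑ s, ∑ s2, (∑ a, P s2 a s * |pol' s2 a - pol s2 a|) * d s2 := by
          refine Finset.sum_le_sum fun s _ => ?_
          rw [hwdef]
          refine (Finset.abs_sum_le_sum_abs _ _).trans ?_
          refine Finset.sum_le_sum fun s2 _ => ?_
          rw [abs_mul, abs_of_nonneg (hd0 s2)]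
          refine mul_le_mul_of_nonneg_right ?_ (hd0 s2)
          have : M' s s2 - M s s2 = ∑ a, P s2 a s * (pol' s2 a - pol s2 a) := by
            rw [hM'def, hMdef]
            simp only [Pmat]
            rw [← Finset.sum_sub_distrib]
            exact Finset.sum_congr rfl fun a _ => by ring
          rw [this]
          refine (Finset.abs_sum_le_sum_abs _ _).trans ?_
          refine Finset.sum_le_sum fun a _ => ?_
          rw [abs_mul, abs_of_nonneg (hP0 s2 a s)]
      _ = ∑ s2, d s2 * (∑ a, |pol' s2 a - pol s2 a|) := by
          rw [Finset.sum_comm]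
          refine Finset.sum_congr rfl fun s2 _ => ?_
          rw [← Finset.sum_mul]
          rw [Finset.sum_comm]
          have : ∑ a, ∑ s, P s2 a s * |pol' s2 a - pol s2 a|
              = ∑ a, |pol' s2 a - pol s2 a| := by
            refine Finset.sum_congr rfl fun a _ => ?_
            rw [← Finset.sum_mul, hP1, one_mul]
          rw [this]
          ring
  have h2 : ∑ s, |e s| ≤ γ * ∑ s, |e s| + γ * ∑ s, d s * (∑ a, |pol' s a - pol s a|) := by
    calc ∑ s, |e s| ≤ γ * (∑ s, |(M' *ᵥ e) s| + ∑ s, |w s|) := habs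
    _ ≤ γ * (∑ s, |e s| + ∑ s, d s * (∑ a, |pol' s a - pol s a|)) := by
        refine mul_le_mul_of_nonneg_left (add_le_add hMe hwb) hγ0
    _ = _ := by ring
  have : ∑ s, |d' s - d s| = ∑ s, |e s| := rfl
  rw [this]
  linarith

lemma main_eq (γ : ℝ) (hγ0 : 0 ≤ γ) (hγ1 : γ < 1)
    (P : S → A → S → ℝ) (hP0 : ∀ s a s', 0 ≤ P s a s') (hP1 : ∀ s a, (∑ s', P s a s') = 1)
    (μ : S → ℝ) (hμ0 : ∀ s, 0 ≤ μ s) (hμ1 : (∑ s, μ s) = 1)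
    (R : S → A → S → ℝ) (f : S → ℝ) (pol pol' : S → A → ℝ)
    (hpol0 : ∀ s a, 0 < pol s a) (hpol1 : ∀ s, (∑ a, pol s a) = 1)
    (hpol'0 : ∀ s a, 0 ≤ pol' s a) (hpol'1 : ∀ s, (∑ a, pol' s a) = 1) :
    (1 - γ) * (Jret γ P R μ pol' - Jret γ P R μ pol)
      = Lsurr γ P R μ f pol pol'
        + ∑ s, (dFut γ P μ pol' s - dFut γ P μ pol s)
            * (∑ a, pol' s a * ∑ s', P s a s' * (R s a s' + γ * f s' - f s)) := by
  have hpol0' : ∀ s a, 0 ≤ pol s a := fun s a => (hpol0 s a).le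
  have hrec := dFut_rec γ hγ0 hγ1 P hP0 hP1 μ hμ0 hμ1 pol hpol0' hpol1
  have hrec' := dFut_rec γ hγ0 hγ1 P hP0 hP1 μ hμ0 hμ1 pol' hpol'0 hpol'1
  have hkey' := key_identity γ hγ1 P hP1 μ R f pol' hpol'1 hrec'
  have hkeyπ := key_identity γ hγ1 P hP1 μ R f pol hpol1 hrec
  have hL : Lsurr γ P R μ f pol pol'
      = ∑ s, dFut γ P μ pol s
            * (∑ a, pol' s a * ∑ s', P s a s' * (R s a s' + γ * f s' - f s))
        - ∑ s, dFut γ P μ pol s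
            * (∑ a, pol s a * ∑ s', P s a s' * (R s a s' + γ * f s' - f s)) := by
    unfold Lsurr
    rw [← Finset.sum_sub_distrib]
    refine Finset.sum_congr rfl fun s _ => ?_
    rw [← mul_sub, ← Finset.sum_sub_distrib]
    congr 1
    refine Finset.sum_congr rfl fun a _ => ?_
    have h1 : ∑ s', P s a s' * ((pol' s a / pol s a - 1) * (R s a s' + γ * f s' - f s))
        = (pol' s a / pol s a - 1) * ∑ s', P s a s' * (R s a s' + γ * f s' - f s) := by
      rw [Finset.mul_sum]
      exact Finset.sum_congr rfl fun s' _ => by ring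
    rw [h1]
    have h2 : pol s a * (pol' s a / pol s a) = pol' s a := by
      rw [mul_comm]
      exact div_mul_cancel₀ _ (hpol0 s a).ne'
    calc pol s a * ((pol' s a / pol s a - 1)
            * ∑ s', P s a s' * (R s a s' + γ * f s' - f s))
        = (pol s a * (pol' s a / pol s a) - pol s a)
            * ∑ s', P s a s' * (R s a s' + γ * f s' - f s) := by ring
      _ = _ := by rw [h2]; ring
  have hsub : ∑ s, (dFut γ P μ pol' s - dFut γ P μ pol s)
        * (∑ a, pol' s a * ∑ s', P s a s' * (R s a s' + γ * f s' - f s))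
      = ∑ s, dFut γ P μ pol' s
            * (∑ a, pol' s a * ∑ s', P s a s' * (R s a s' + γ * f s' - f s))
        - ∑ s, dFut γ P μ pol s
            * (∑ a, pol' s a * ∑ s', P s a s' * (R s a s' + γ * f s' - f s)) := by
    rw [← Finset.sum_sub_distrib]
    exact Finset.sum_congr rfl fun s _ => by ring
  rw [hL, hsub]
  linarith [hkey', hkeyπ]


end helpers

/-- **Theorem 1 (policy performance bound).**  For any `f : S → ℝ` and any policies `pol'`, `pol`
with `pol` everywhere positive,
`D⁻ ≤ J(π') - J(π) ≤ D⁺` where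
`D^± = L_{π,f}(π')/(1-γ) ± (2γ ε_f^{π'}/(1-γ)²) E_{s∼d^π}[D_TV(π'‖π)[s]]`;
moreover when `π' = π` all three expressions are identically zero. -/
theorem policy_performance_bound
    [Fintype S] [DecidableEq S] [Nonempty S] [Fintype A] [Nonempty A]
    (γ : ℝ) (hγ0 : 0 ≤ γ) (hγ1 : γ < 1)
    (P : S → A → S → ℝ) (hP0 : ∀ s a s', 0 ≤ P s a s')
    (hP1 : ∀ s a, (∑ s', P s a s') = 1)
    (μ : S → ℝ) (hμ0 : ∀ s, 0 ≤ μ s) (hμ1 : (∑ s, μ s) = 1)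
    (R : S → A → S → ℝ) (f : S → ℝ)
    (pol pol' : S → A → ℝ)
    (hpol0 : ∀ s a, 0 < pol s a) (hpol1 : ∀ s, (∑ a, pol s a) = 1)
    (hpol'0 : ∀ s a, 0 ≤ pol' s a) (hpol'1 : ∀ s, (∑ a, pol' s a) = 1) :
    (Lsurr γ P R μ f pol pol' / (1 - γ)
        - 2 * γ * epsF γ P R f pol' / (1 - γ) ^ 2
          * (∑ s, dFut γ P μ pol s * DTV pol' pol s)
      ≤ Jret γ P R μ pol' - Jret γ P R μ pol)
    ∧ (Jret γ P R μ pol' - Jret γ P R μ pol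
      ≤ Lsurr γ P R μ f pol pol' / (1 - γ)
        + 2 * γ * epsF γ P R f pol' / (1 - γ) ^ 2
          * (∑ s, dFut γ P μ pol s * DTV pol' pol s))
    ∧ (pol' = pol →
        (Lsurr γ P R μ f pol pol' / (1 - γ)
          - 2 * γ * epsF γ P R f pol' / (1 - γ) ^ 2
            * (∑ s, dFut γ P μ pol s * DTV pol' pol s) = 0)
        ∧ Jret γ P R μ pol' - Jret γ P R μ pol = 0
        ∧ (Lsurr γ P R μ f pol pol' / (1 - γ)
          + 2 * γ * epsF γ P R f pol' / (1 - γ) ^ 2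
            * (∑ s, dFut γ P μ pol s * DTV pol' pol s) = 0)) := by
  have hc : (0:ℝ) < 1 - γ := by linarith
  have hpol0' : ∀ s a, 0 ≤ pol s a := fun s a => (hpol0 s a).le
  have hrec := dFut_rec γ hγ0 hγ1 P hP0 hP1 μ hμ0 hμ1 pol hpol0' hpol1
  have hrec' := dFut_rec γ hγ0 hγ1 P hP0 hP1 μ hμ0 hμ1 pol' hpol'0 hpol'1
  have hd0 := dFut_nonneg γ hγ0 hγ1 P hP0 μ hμ0 pol hpol0'
  have hεb : ∀ s, |∑ a, pol' s a * (∑ s', P s a s' * (R s a s' + γ * f s' - f s))|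
      ≤ epsF γ P R f pol' := by
    intro s
    unfold epsF
    have hb : BddAbove (Set.range (fun s0 : S =>
        |∑ a, pol' s0 a * (∑ s', P s0 a s' * (R s0 a s' + γ * f s' - f s0))|)) :=
      Set.Finite.bddAbove (Set.finite_range _)
    exact le_ciSup hb s
  have hε0 : 0 ≤ epsF γ P R f pol' :=
    le_trans (abs_nonneg _) (hεb (Classical.arbitrary S))
  have habs : |∑ s, (dFut γ P μ pol' s - dFut γ P μ pol s)
        * (∑ a, pol' s a * ∑ s', P s a s' * (R s a s' + γ * f s' - f s))|
      ≤ epsF γ P R f pol' * ∑ s, |dFut γ P μ pol' s - dFut γ P μ pol s| := by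
    refine (Finset.abs_sum_le_sum_abs _ _).trans ?_
    rw [Finset.mul_sum]
    refine Finset.sum_le_sum fun s _ => ?_
    rw [abs_mul]
    calc |dFut γ P μ pol' s - dFut γ P μ pol s|
            * |∑ a, pol' s a * ∑ s', P s a s' * (R s a s' + γ * f s' - f s)|
        ≤ |dFut γ P μ pol' s - dFut γ P μ pol s| * epsF γ P R f pol' :=
          mul_le_mul_of_nonneg_left (hεb s) (abs_nonneg _)
      _ = epsF γ P R f pol' * |dFut γ P μ pol' s - dFut γ P μ pol s| := mul_comm _ _
  have hl1 := l1_bound γ hγ0 hγ1 P hP0 hP1 μ pol pol' hpol'0 hpol'1 hd0 hrec hrec'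
  have hDTVsum : ∑ s, dFut γ P μ pol s * (∑ a, |pol' s a - pol s a|)
      = 2 * ∑ s, dFut γ P μ pol s * DTV pol' pol s := by
    rw [Finset.mul_sum]
    refine Finset.sum_congr rfl fun s _ => ?_
    simp only [DTV]; ring
  have hK0 : 0 ≤ ∑ s, dFut γ P μ pol s * DTV pol' pol s :=
    Finset.sum_nonneg fun s _ => mul_nonneg (hd0 s) (by
      simp only [DTV]
      positivity)
  have hE : ∑ s, |dFut γ P μ pol' s - dFut γ P μ pol s|
      ≤ γ * (2 * ∑ s, dFut γ P μ pol s * DTV pol' pol s) / (1 - γ) := by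
    rw [le_div_iff₀ hc]
    rw [hDTVsum] at hl1
    linarith
  have hfin : |(1 - γ) * (Jret γ P R μ pol' - Jret γ P R μ pol)
        - Lsurr γ P R μ f pol pol'|
      ≤ epsF γ P R f pol'
        * (γ * (2 * ∑ s, dFut γ P μ pol s * DTV pol' pol s) / (1 - γ)) := by
    rw [main_eq γ hγ0 hγ1 P hP0 hP1 μ hμ0 hμ1 R f pol pol' hpol0 hpol1 hpol'0 hpol'1]
    rw [add_sub_cancel_left]
    exact habs.trans (mul_le_mul_of_nonneg_left hE hε0)
  obtain ⟨hlo, hhi⟩ := abs_le.mp hfin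
  have heq1 : (Lsurr γ P R μ f pol pol'
        - epsF γ P R f pol'
          * (γ * (2 * ∑ s, dFut γ P μ pol s * DTV pol' pol s) / (1 - γ))) / (1 - γ)
      = Lsurr γ P R μ f pol pol' / (1 - γ)
        - 2 * γ * epsF γ P R f pol' / (1 - γ) ^ 2
          * (∑ s, dFut γ P μ pol s * DTV pol' pol s) := by
    field_simp
  have heq2 : (Lsurr γ P R μ f pol pol'
        + epsF γ P R f pol'
          * (γ * (2 * ∑ s, dFut γ P μ pol s * DTV pol' pol s) / (1 - γ))) / (1 - γ)
      = Lsurr γ P R μ f pol pol' / (1 - γ)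
        + 2 * γ * epsF γ P R f pol' / (1 - γ) ^ 2
          * (∑ s, dFut γ P μ pol s * DTV pol' pol s) := by
    field_simp
  refine ⟨?_, ?_, ?_⟩
  · rw [← heq1, div_le_iff₀ hc]
    linarith
  · rw [← heq2, le_div_iff₀ hc]
    linarith
  · intro hpp
    subst hpp
    have hL0 : Lsurr γ P R μ f pol' pol' = 0 := by
      have hz : ∀ s a s', (pol' s a / pol' s a - 1) * (R s a s' + γ * f s' - f s) = 0 := by
        intro s a s'
        rw [div_self (hpol0 s a).ne']
        ring
      simp [Lsurr, hz]
    have hDTV0 : ∀ s : S, DTV pol' pol' s = 0 := by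
      intro s; simp [DTV]
    refine ⟨?_, by ring, ?_⟩ <;> simp [hL0, hDTV0]
end
end

section
/- For any two policies π' and π and any auxiliary cost function C_i, with ε_{C_i}^{π'} = max_s |E_{a∼π'(·|s)}[A_{C_i}^π(s,a)]|, the following upper bound holds: J_{C_i}(π') - J_{C_i}(π) ≤ (1/(1-γ)) · E_{s∼d^π, a∼π'(·|s)}[A_{C_i}^π(s,a) + (2γ ε_{C_i}^{π'}/(1-γ)) D_TV(π'‖π)[s]]. -/
open BigOperators Finset Matrix

noncomputable section

variable {S A : Type*}

set_option linter.unusedSectionVars false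

section CRUBAux
variable [Fintype S] [DecidableEq S] [Fintype A]

lemma crub_pow_prob (P : S → A → S → ℝ) (μ : S → ℝ) (p : S → A → ℝ)
    (hP0 : ∀ s a s', 0 ≤ P s a s') (hP1 : ∀ s a, (∑ s', P s a s') = 1)
    (hp0 : ∀ s a, 0 ≤ p s a) (hp1 : ∀ s, (∑ a, p s a) = 1)
    (hμ0 : ∀ s, 0 ≤ μ s) (hμ1 : (∑ s, μ s) = 1) (t : ℕ) :
    (∀ s, 0 ≤ ((Pmat P p ^ t) *ᵥ μ) s) ∧ (∑ s, ((Pmat P p ^ t) *ᵥ μ) s) = 1 := by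
  induction t with
  | zero => simpa [Matrix.one_mulVec] using ⟨hμ0, hμ1⟩
  | succ n ih =>
    have hstep : ((Pmat P p ^ (n+1)) *ᵥ μ) = Pmat P p *ᵥ ((Pmat P p ^ n) *ᵥ μ) := by
      rw [pow_succ', Matrix.mulVec_mulVec]
    constructor
    · intro s
      rw [hstep]
      refine Finset.sum_nonneg fun s' _ => mul_nonneg ?_ (ih.1 s')
      exact Finset.sum_nonneg fun a _ => mul_nonneg (hP0 _ _ _) (hp0 _ _)
    · rw [hstep]
      have : ∀ x : S → ℝ, (∑ s, (Pmat P p *ᵥ x) s) = ∑ s', x s' := by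
        intro x
        simp only [Matrix.mulVec, dotProduct, Pmat]
        rw [Finset.sum_comm]
        refine Finset.sum_congr rfl fun s' _ => ?_
        rw [← Finset.sum_mul]
        rw [show (∑ s, ∑ a, P s' a s * p s' a) = ∑ a, (∑ s, P s' a s) * p s' a by
          rw [Finset.sum_comm]; exact Finset.sum_congr rfl fun a _ => (Finset.sum_mul _ _ _).symm]
        simp [hP1, hp1]
      rw [this, ih.2]

lemma crub_summable (γ : ℝ) (P : S → A → S → ℝ) (μ : S → ℝ) (p : S → A → ℝ)
    (hγ0 : 0 ≤ γ) (hγ1 : γ < 1)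
    (hP0 : ∀ s a s', 0 ≤ P s a s') (hP1 : ∀ s a, (∑ s', P s a s') = 1)
    (hp0 : ∀ s a, 0 ≤ p s a) (hp1 : ∀ s, (∑ a, p s a) = 1)
    (hμ0 : ∀ s, 0 ≤ μ s) (hμ1 : (∑ s, μ s) = 1) (s : S) :
    Summable (fun t : ℕ => γ ^ t * ((Pmat P p ^ t) *ᵥ μ) s) := by
  refine Summable.of_nonneg_of_le (fun t => mul_nonneg (pow_nonneg hγ0 t)
    ((crub_pow_prob P μ p hP0 hP1 hp0 hp1 hμ0 hμ1 t).1 s)) (fun t => ?_)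
    (summable_geometric_of_lt_one hγ0 hγ1)
  have h := crub_pow_prob P μ p hP0 hP1 hp0 hp1 hμ0 hμ1 t
  have hle : ((Pmat P p ^ t) *ᵥ μ) s ≤ 1 := by
    rw [← h.2]
    exact Finset.single_le_sum (fun s' _ => h.1 s') (Finset.mem_univ s)
  calc γ ^ t * ((Pmat P p ^ t) *ᵥ μ) s ≤ γ ^ t * 1 :=
        mul_le_mul_of_nonneg_left hle (pow_nonneg hγ0 t)
    _ = γ ^ t := mul_one _

lemma crub_dFut_nonneg (γ : ℝ) (P : S → A → S → ℝ) (μ : S → ℝ) (p : S → A → ℝ)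
    (hγ0 : 0 ≤ γ) (hγ1 : γ < 1)
    (hP0 : ∀ s a s', 0 ≤ P s a s') (hP1 : ∀ s a, (∑ s', P s a s') = 1)
    (hp0 : ∀ s a, 0 ≤ p s a) (hp1 : ∀ s, (∑ a, p s a) = 1)
    (hμ0 : ∀ s, 0 ≤ μ s) (hμ1 : (∑ s, μ s) = 1) (s : S) :
    0 ≤ dFut γ P μ p s :=
  mul_nonneg (by linarith) (tsum_nonneg fun t => mul_nonneg (pow_nonneg hγ0 t)
    ((crub_pow_prob P μ p hP0 hP1 hp0 hp1 hμ0 hμ1 t).1 s))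

lemma crub_dFut_fixed (γ : ℝ) (P : S → A → S → ℝ) (μ : S → ℝ) (p : S → A → ℝ)
    (hγ0 : 0 ≤ γ) (hγ1 : γ < 1)
    (hP0 : ∀ s a s', 0 ≤ P s a s') (hP1 : ∀ s a, (∑ s', P s a s') = 1)
    (hp0 : ∀ s a, 0 ≤ p s a) (hp1 : ∀ s, (∑ a, p s a) = 1)
    (hμ0 : ∀ s, 0 ≤ μ s) (hμ1 : (∑ s, μ s) = 1) (s : S) :
    dFut γ P μ p s = (1 - γ) * μ s + γ * ∑ s', Pmat P p s s' * dFut γ P μ p s' := by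
  have hsum : ∀ s, Summable (fun t : ℕ => γ ^ t * ((Pmat P p ^ t) *ᵥ μ) s) :=
    crub_summable γ P μ p hγ0 hγ1 hP0 hP1 hp0 hp1 hμ0 hμ1
  have hshift : (∑' t : ℕ, γ ^ t * ((Pmat P p ^ t) *ᵥ μ) s)
      = μ s + ∑' t : ℕ, γ ^ (t+1) * ((Pmat P p ^ (t+1)) *ᵥ μ) s := by
    rw [Summable.tsum_eq_zero_add (hsum s)]
    simp [Matrix.one_mulVec]
  have hterm : ∀ t : ℕ, γ ^ (t+1) * ((Pmat P p ^ (t+1)) *ᵥ μ) s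
      = ∑ s', Pmat P p s s' * (γ * (γ ^ t * ((Pmat P p ^ t) *ᵥ μ) s')) := by
    intro t
    rw [show Pmat P p ^ (t+1) = Pmat P p * Pmat P p ^ t from pow_succ' _ _,
      ← Matrix.mulVec_mulVec]
    simp only [Matrix.mulVec, dotProduct]
    rw [Finset.mul_sum]
    exact Finset.sum_congr rfl fun s' _ => by ring
  have hswap : (∑' t : ℕ, γ ^ (t+1) * ((Pmat P p ^ (t+1)) *ᵥ μ) s)
      = ∑ s', Pmat P p s s' * (γ * ∑' t : ℕ, γ ^ t * ((Pmat P p ^ t) *ᵥ μ) s') := by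
    calc (∑' t : ℕ, γ ^ (t+1) * ((Pmat P p ^ (t+1)) *ᵥ μ) s)
        = ∑' t : ℕ, ∑ s', Pmat P p s s' * (γ * (γ ^ t * ((Pmat P p ^ t) *ᵥ μ) s')) :=
          tsum_congr hterm
      _ = ∑ s', ∑' t : ℕ, Pmat P p s s' * (γ * (γ ^ t * ((Pmat P p ^ t) *ᵥ μ) s')) :=
          Summable.tsum_finsetSum fun s' _ => (((hsum s').mul_left γ).mul_left _)
      _ = ∑ s', Pmat P p s s' * (γ * ∑' t : ℕ, γ ^ t * ((Pmat P p ^ t) *ᵥ μ) s') := by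
          refine Finset.sum_congr rfl fun s' _ => ?_
          rw [tsum_mul_left, tsum_mul_left]
  show (1 - γ) * _ = _
  rw [hshift, hswap, mul_add]
  rw [Finset.mul_sum, Finset.mul_sum]
  congr 1
  refine Finset.sum_congr rfl fun s' _ => ?_
  show (1-γ) * (Pmat P p s s' * (γ * _)) = γ * (Pmat P p s s' * ((1-γ) * _))
  ring

lemma crub_col (P : S → A → S → ℝ) (q : S → A → ℝ)
    (hP1 : ∀ s a, (∑ s', P s a s') = 1)
    (hq1 : ∀ s, (∑ a, q s a) = 1) (s' : S) : (∑ s, Pmat P q s s') = 1 := by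
  simp only [Pmat]
  rw [Finset.sum_comm]
  calc (∑ a, ∑ s, P s' a s * q s' a) = ∑ a, (∑ s, P s' a s) * q s' a := by
        exact Finset.sum_congr rfl fun a _ => (Finset.sum_mul _ _ _).symm
    _ = ∑ a, q s' a := by
        refine Finset.sum_congr rfl fun a _ => by rw [hP1, one_mul]
    _ = 1 := hq1 s'

lemma crub_sum_adv (γ : ℝ) (P : S → A → S → ℝ) (C : S → A → S → ℝ) (VC : S → ℝ)
    (q : S → A → ℝ) (hq1 : ∀ s, (∑ a, q s a) = 1) (s : S) :
    (∑ a, q s a * Adv γ P C VC s a)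
      = (∑ a, q s a * (∑ s', P s a s' * C s a s'))
        + γ * (∑ s', Pmat P q s' s * VC s') - VC s := by
  have hsplit : ∀ a, (∑ s', P s a s' * (C s a s' + γ * VC s'))
      = (∑ s', P s a s' * C s a s') + γ * ∑ s', P s a s' * VC s' := by
    intro a
    rw [Finset.mul_sum, ← Finset.sum_add_distrib]
    exact Finset.sum_congr rfl fun s' _ => by ring
  have hswap : (∑ a, q s a * ∑ s', P s a s' * VC s') = ∑ s', Pmat P q s' s * VC s' := by
    calc (∑ a, q s a * ∑ s', P s a s' * VC s')
        = ∑ a, ∑ s', P s a s' * q s a * VC s' := by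
          refine Finset.sum_congr rfl fun a _ => ?_
          rw [Finset.mul_sum]
          exact Finset.sum_congr rfl fun s' _ => by ring
      _ = ∑ s', ∑ a, P s a s' * q s a * VC s' := Finset.sum_comm
      _ = ∑ s', (∑ a, P s a s' * q s a) * VC s' :=
          Finset.sum_congr rfl fun s' _ => (Finset.sum_mul _ _ _).symm
      _ = ∑ s', Pmat P q s' s * VC s' := rfl
  calc (∑ a, q s a * Adv γ P C VC s a)
      = ∑ a, (q s a * (∑ s', P s a s' * C s a s')
          + γ * (q s a * ∑ s', P s a s' * VC s') - q s a * VC s) := by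
        refine Finset.sum_congr rfl fun a _ => ?_
        simp only [Adv]
        rw [hsplit a]; ring
    _ = (∑ a, q s a * (∑ s', P s a s' * C s a s'))
          + γ * (∑ a, q s a * ∑ s', P s a s' * VC s') - (∑ a, q s a) * VC s := by
        rw [Finset.sum_sub_distrib, Finset.sum_add_distrib, ← Finset.mul_sum,
          Finset.sum_mul]
    _ = _ := by rw [hq1 s, one_mul, hswap]

lemma crub_dc (γ : ℝ) (P : S → A → S → ℝ) (μ : S → ℝ) (C : S → A → S → ℝ)
    (VC : S → ℝ) (q : S → A → ℝ)
    (hγ0 : 0 ≤ γ) (hγ1 : γ < 1)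
    (hP0 : ∀ s a s', 0 ≤ P s a s') (hP1 : ∀ s a, (∑ s', P s a s') = 1)
    (hq0 : ∀ s a, 0 ≤ q s a) (hq1 : ∀ s, (∑ a, q s a) = 1)
    (hμ0 : ∀ s, 0 ≤ μ s) (hμ1 : (∑ s, μ s) = 1) :
    (∑ s, dFut γ P μ q s * (∑ a, q s a * Adv γ P C VC s a))
      = (∑ s, dFut γ P μ q s * (∑ a, q s a * (∑ s', P s a s' * C s a s')))
        - (1 - γ) * ∑ s, μ s * VC s := by
  have hfix' : ∀ s, γ * (∑ s', Pmat P q s s' * dFut γ P μ q s')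
      = dFut γ P μ q s - (1 - γ) * μ s := fun s => by
    have := crub_dFut_fixed γ P μ q hγ0 hγ1 hP0 hP1 hq0 hq1 hμ0 hμ1 s
    linarith
  have hmid : (∑ s, dFut γ P μ q s * (γ * ∑ s', Pmat P q s' s * VC s'))
      = (∑ s, dFut γ P μ q s * VC s) - (1 - γ) * ∑ s, μ s * VC s := by
    calc (∑ s, dFut γ P μ q s * (γ * ∑ s', Pmat P q s' s * VC s'))
        = ∑ s, ∑ s', γ * (Pmat P q s' s * dFut γ P μ q s) * VC s' := by
          refine Finset.sum_congr rfl fun s _ => ?_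
          rw [Finset.mul_sum, Finset.mul_sum]
          exact Finset.sum_congr rfl fun s' _ => by ring
      _ = ∑ s', ∑ s, γ * (Pmat P q s' s * dFut γ P μ q s) * VC s' := Finset.sum_comm
      _ = ∑ s', (γ * ∑ s, Pmat P q s' s * dFut γ P μ q s) * VC s' := by
          refine Finset.sum_congr rfl fun s' _ => ?_
          rw [← Finset.sum_mul, ← Finset.mul_sum]
      _ = ∑ s', (dFut γ P μ q s' - (1 - γ) * μ s') * VC s' := by
          refine Finset.sum_congr rfl fun s' _ => ?_
          rw [hfix' s']
      _ = (∑ s', dFut γ P μ q s' * VC s') - (1 - γ) * ∑ s', μ s' * VC s' := by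
          rw [Finset.mul_sum, ← Finset.sum_sub_distrib]
          exact Finset.sum_congr rfl fun s' _ => by ring
  calc (∑ s, dFut γ P μ q s * (∑ a, q s a * Adv γ P C VC s a))
      = ∑ s, (dFut γ P μ q s * (∑ a, q s a * (∑ s', P s a s' * C s a s'))
          + dFut γ P μ q s * (γ * ∑ s', Pmat P q s' s * VC s')
          - dFut γ P μ q s * VC s) := by
        refine Finset.sum_congr rfl fun s _ => ?_
        rw [crub_sum_adv γ P C VC q hq1 s]; ring
    _ = (∑ s, dFut γ P μ q s * (∑ a, q s a * (∑ s', P s a s' * C s a s')))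
          + (∑ s, dFut γ P μ q s * (γ * ∑ s', Pmat P q s' s * VC s'))
          - ∑ s, dFut γ P μ q s * VC s := by
        rw [Finset.sum_sub_distrib, Finset.sum_add_distrib]
    _ = _ := by rw [hmid]; ring

end CRUBAux

/-- **Corollary 2.** For any two policies and any auxiliary cost `C`, with
`ε_C^{π'} = max_s |E_{a∼π'}[A_C^π(s,a)]|`,
`J_C(π') - J_C(π) ≤ (1/(1-γ)) E_{s∼d^π, a∼π'}[A_C^π(s,a) + (2γε_C^{π'}/(1-γ)) D_TV(π'‖π)[s]]`. -/
theorem cost_return_upper_bound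
    [Fintype S] [DecidableEq S] [Nonempty S] [Fintype A] [Nonempty A]
    (γ : ℝ) (hγ0 : 0 ≤ γ) (hγ1 : γ < 1)
    (P : S → A → S → ℝ) (hP0 : ∀ s a s', 0 ≤ P s a s')
    (hP1 : ∀ s a, (∑ s', P s a s') = 1)
    (μ : S → ℝ) (hμ0 : ∀ s, 0 ≤ μ s) (hμ1 : (∑ s, μ s) = 1)
    (C : S → A → S → ℝ)
    (pol pol' : S → A → ℝ)
    (hpol0 : ∀ s a, 0 ≤ pol s a) (hpol1 : ∀ s, (∑ a, pol s a) = 1)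
    (hpol'0 : ∀ s a, 0 ≤ pol' s a) (hpol'1 : ∀ s, (∑ a, pol' s a) = 1)
    (VC : S → ℝ)
    (hVC : ∀ s, VC s = ∑ a, pol s a * (∑ s', P s a s' * (C s a s' + γ * VC s'))) :
    Jret γ P C μ pol' - Jret γ P C μ pol
      ≤ (1 / (1 - γ)) * ∑ s, dFut γ P μ pol s *
          (∑ a, pol' s a *
            (Adv γ P C VC s a
              + 2 * γ * (⨆ t, |∑ a', pol' t a' * Adv γ P C VC t a'|) / (1 - γ)
                  * DTV pol' pol s)) := by
  have hγ' : (0:ℝ) < 1 - γ := by linarith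
  set ε : ℝ := ⨆ t, |∑ a', pol' t a' * Adv γ P C VC t a'| with hεdef
  have hεle : ∀ s, |∑ a, pol' s a * Adv γ P C VC s a| ≤ ε := by
    intro s
    rw [hεdef]
    exact le_ciSup (f := fun t => |∑ a', pol' t a' * Adv γ P C VC t a'|)
      (Set.Finite.bddAbove (Set.finite_range _)) s
  have hε0 : 0 ≤ ε := le_trans (abs_nonneg _) (hεle (Classical.arbitrary S))
  have hd0 : ∀ s, 0 ≤ dFut γ P μ pol s :=
    crub_dFut_nonneg γ P μ pol hγ0 hγ1 hP0 hP1 hpol0 hpol1 hμ0 hμ1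
  have hM'0 : ∀ s s', 0 ≤ Pmat P pol' s s' := fun s s' =>
    Finset.sum_nonneg fun a _ => mul_nonneg (hP0 _ _ _) (hpol'0 _ _)
  -- advantage of pol against itself is zero
  have habar0 : ∀ s, (∑ a, pol s a * Adv γ P C VC s a) = 0 := by
    intro s
    simp only [Adv]
    rw [show (∑ a, pol s a * ((∑ s', P s a s' * (C s a s' + γ * VC s')) - VC s))
        = (∑ a, pol s a * (∑ s', P s a s' * (C s a s' + γ * VC s')))
          - (∑ a, pol s a) * VC s from by
      rw [Finset.sum_mul, ← Finset.sum_sub_distrib]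
      exact Finset.sum_congr rfl fun a _ => by ring]
    rw [← hVC s, hpol1 s, one_mul, sub_self]
  -- performance difference identity
  have hJ : Jret γ P C μ pol' - Jret γ P C μ pol
      = (1 / (1 - γ)) * ∑ s, dFut γ P μ pol' s *
          (∑ a, pol' s a * Adv γ P C VC s a) := by
    have h1 := crub_dc γ P μ C VC pol' hγ0 hγ1 hP0 hP1 hpol'0 hpol'1 hμ0 hμ1
    have h2 := crub_dc γ P μ C VC pol hγ0 hγ1 hP0 hP1 hpol0 hpol1 hμ0 hμ1
    have h20 : (∑ s, dFut γ P μ pol s * (∑ a, pol s a * Adv γ P C VC s a)) = 0 :=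
      Finset.sum_eq_zero fun s _ => by rw [habar0 s, mul_zero]
    have h2' : (∑ s, dFut γ P μ pol s *
        (∑ a, pol s a * (∑ s', P s a s' * C s a s')))
        = (1 - γ) * ∑ s, μ s * VC s := by
      rw [h20] at h2; linarith
    simp only [Jret]
    rw [h1, h2']
    ring
  -- fixed points
  have hfixπ := crub_dFut_fixed γ P μ pol hγ0 hγ1 hP0 hP1 hpol0 hpol1 hμ0 hμ1
  have hfixπ' := crub_dFut_fixed γ P μ pol' hγ0 hγ1 hP0 hP1 hpol'0 hpol'1 hμ0 hμ1
  have hdiff : ∀ s, dFut γ P μ pol' s - dFut γ P μ pol s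
      = γ * (∑ s', Pmat P pol' s s' * (dFut γ P μ pol' s' - dFut γ P μ pol s'))
        + γ * (∑ s', (Pmat P pol' s s' - Pmat P pol s s') * dFut γ P μ pol s') := by
    intro s
    have e1 : (∑ s', Pmat P pol' s s' * (dFut γ P μ pol' s' - dFut γ P μ pol s'))
        = (∑ s', Pmat P pol' s s' * dFut γ P μ pol' s')
          - ∑ s', Pmat P pol' s s' * dFut γ P μ pol s' := by
      rw [← Finset.sum_sub_distrib]
      exact Finset.sum_congr rfl fun _ _ => mul_sub _ _ _
    have e2 : (∑ s', (Pmat P pol' s s' - Pmat P pol s s') * dFut γ P μ pol s')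
        = (∑ s', Pmat P pol' s s' * dFut γ P μ pol s')
          - ∑ s', Pmat P pol s s' * dFut γ P μ pol s' := by
      rw [← Finset.sum_sub_distrib]
      exact Finset.sum_congr rfl fun _ _ => sub_mul _ _ _
    rw [hfixπ' s, hfixπ s, e1, e2]
    ring
  -- L1 contraction bound
  have hE : (∑ s, |dFut γ P μ pol' s - dFut γ P μ pol s|)
      ≤ γ * (∑ s, |dFut γ P μ pol' s - dFut γ P μ pol s|)
        + γ * (2 * ∑ s, dFut γ P μ pol s * DTV pol' pol s) := by
    have hstep : ∀ s, |dFut γ P μ pol' s - dFut γ P μ pol s|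
        ≤ γ * (∑ s', Pmat P pol' s s' * |dFut γ P μ pol' s' - dFut γ P μ pol s'|)
          + γ * (∑ s', (∑ a, P s' a s * |pol' s' a - pol s' a|)
              * dFut γ P μ pol s') := by
      intro s
      rw [hdiff s]
      refine le_trans (abs_add_le _ _) (add_le_add ?_ ?_)
      · rw [abs_mul, abs_of_nonneg hγ0]
        refine mul_le_mul_of_nonneg_left ?_ hγ0
        refine le_trans (Finset.abs_sum_le_sum_abs _ _)
          (Finset.sum_le_sum fun s' _ => ?_)
        rw [abs_mul, abs_of_nonneg (hM'0 s s')]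
      · rw [abs_mul, abs_of_nonneg hγ0]
        refine mul_le_mul_of_nonneg_left ?_ hγ0
        refine le_trans (Finset.abs_sum_le_sum_abs _ _)
          (Finset.sum_le_sum fun s' _ => ?_)
        rw [abs_mul, abs_of_nonneg (hd0 s')]
        refine mul_le_mul_of_nonneg_right ?_ (hd0 s')
        have hΔ : Pmat P pol' s s' - Pmat P pol s s'
            = ∑ a, P s' a s * (pol' s' a - pol s' a) := by
          simp only [Pmat]
          rw [← Finset.sum_sub_distrib]
          exact Finset.sum_congr rfl fun a _ => (mul_sub _ _ _).symm
        rw [hΔ]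
        refine le_trans (Finset.abs_sum_le_sum_abs _ _)
          (Finset.sum_le_sum fun a _ => ?_)
        rw [abs_mul, abs_of_nonneg (hP0 _ _ _)]
    calc (∑ s, |dFut γ P μ pol' s - dFut γ P μ pol s|)
        ≤ ∑ s, (γ * (∑ s', Pmat P pol' s s'
              * |dFut γ P μ pol' s' - dFut γ P μ pol s'|)
            + γ * (∑ s', (∑ a, P s' a s * |pol' s' a - pol s' a|)
                * dFut γ P μ pol s')) :=
          Finset.sum_le_sum fun s _ => hstep s
      _ = γ * (∑ s, ∑ s', Pmat P pol' s s'
              * |dFut γ P μ pol' s' - dFut γ P μ pol s'|)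
            + γ * (∑ s, ∑ s', (∑ a, P s' a s * |pol' s' a - pol s' a|)
                * dFut γ P μ pol s') := by
          rw [Finset.sum_add_distrib, Finset.mul_sum, Finset.mul_sum]
      _ = γ * (∑ s, |dFut γ P μ pol' s - dFut γ P μ pol s|)
            + γ * (2 * ∑ s, dFut γ P μ pol s * DTV pol' pol s) := by
          congr 1
          · congr 1
            rw [Finset.sum_comm]
            calc (∑ s', ∑ s, Pmat P pol' s s'
                    * |dFut γ P μ pol' s' - dFut γ P μ pol s'|)
                = ∑ s', (∑ s, Pmat P pol' s s')
                    * |dFut γ P μ pol' s' - dFut γ P μ pol s'| :=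
                  Finset.sum_congr rfl fun s' _ => (Finset.sum_mul _ _ _).symm
              _ = ∑ s', |dFut γ P μ pol' s' - dFut γ P μ pol s'| := by
                  refine Finset.sum_congr rfl fun s' _ => ?_
                  rw [crub_col P pol' hP1 hpol'1 s', one_mul]
          · congr 1
            rw [Finset.sum_comm]
            calc (∑ s', ∑ s, (∑ a, P s' a s * |pol' s' a - pol s' a|)
                    * dFut γ P μ pol s')
                = ∑ s', (∑ s, ∑ a, P s' a s * |pol' s' a - pol s' a|)
                    * dFut γ P μ pol s' :=
                  Finset.sum_congr rfl fun s' _ => (Finset.sum_mul _ _ _).symm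
              _ = ∑ s', (∑ a, |pol' s' a - pol s' a|) * dFut γ P μ pol s' := by
                  refine Finset.sum_congr rfl fun s' _ => ?_
                  congr 1
                  rw [Finset.sum_comm]
                  refine Finset.sum_congr rfl fun a _ => ?_
                  rw [← Finset.sum_mul, hP1 s' a, one_mul]
              _ = 2 * ∑ s', dFut γ P μ pol s' * DTV pol' pol s' := by
                  rw [Finset.mul_sum]
                  refine Finset.sum_congr rfl fun s' _ => ?_
                  simp only [DTV]
                  ring
  have hEfin : (∑ s, |dFut γ P μ pol' s - dFut γ P μ pol s|)
      ≤ 2 * γ * (∑ s, dFut γ P μ pol s * DTV pol' pol s) / (1 - γ) := by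
    rw [le_div_iff₀ hγ']
    nlinarith [hE]
  -- key inequality
  have hkey : (∑ s, dFut γ P μ pol' s * (∑ a, pol' s a * Adv γ P C VC s a))
      ≤ (∑ s, dFut γ P μ pol s * (∑ a, pol' s a * Adv γ P C VC s a))
        + 2 * γ * ε / (1 - γ) * (∑ s, dFut γ P μ pol s * DTV pol' pol s) := by
    have hsplit : (∑ s, dFut γ P μ pol' s * (∑ a, pol' s a * Adv γ P C VC s a))
        - (∑ s, dFut γ P μ pol s * (∑ a, pol' s a * Adv γ P C VC s a))
        = ∑ s, (dFut γ P μ pol' s - dFut γ P μ pol s)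
            * (∑ a, pol' s a * Adv γ P C VC s a) := by
      rw [← Finset.sum_sub_distrib]
      exact Finset.sum_congr rfl fun _ _ => (sub_mul _ _ _).symm
    have h1 : (∑ s, (dFut γ P μ pol' s - dFut γ P μ pol s)
          * (∑ a, pol' s a * Adv γ P C VC s a))
        ≤ (∑ s, |dFut γ P μ pol' s - dFut γ P μ pol s|) * ε := by
      rw [Finset.sum_mul]
      refine Finset.sum_le_sum fun s _ => ?_
      calc (dFut γ P μ pol' s - dFut γ P μ pol s)
              * (∑ a, pol' s a * Adv γ P C VC s a)
          ≤ |(dFut γ P μ pol' s - dFut γ P μ pol s)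
              * (∑ a, pol' s a * Adv γ P C VC s a)| := le_abs_self _
        _ = |dFut γ P μ pol' s - dFut γ P μ pol s|
              * |∑ a, pol' s a * Adv γ P C VC s a| := abs_mul _ _
        _ ≤ |dFut γ P μ pol' s - dFut γ P μ pol s| * ε :=
            mul_le_mul_of_nonneg_left (hεle s) (abs_nonneg _)
    have h2 : (∑ s, |dFut γ P μ pol' s - dFut γ P μ pol s|) * ε
        ≤ (2 * γ * (∑ s, dFut γ P μ pol s * DTV pol' pol s) / (1 - γ)) * ε :=
      mul_le_mul_of_nonneg_right hEfin hε0
    have h3 : (2 * γ * (∑ s, dFut γ P μ pol s * DTV pol' pol s) / (1 - γ)) * ε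
        = 2 * γ * ε / (1 - γ) * (∑ s, dFut γ P μ pol s * DTV pol' pol s) := by
      ring
    linarith
  -- assemble
  have hinner : ∀ s, (∑ a, pol' s a * (Adv γ P C VC s a
        + 2 * γ * ε / (1 - γ) * DTV pol' pol s))
      = (∑ a, pol' s a * Adv γ P C VC s a)
        + 2 * γ * ε / (1 - γ) * DTV pol' pol s := by
    intro s
    rw [show (∑ a, pol' s a * (Adv γ P C VC s a
          + 2 * γ * ε / (1 - γ) * DTV pol' pol s))
        = (∑ a, pol' s a * Adv γ P C VC s a)
          + (∑ a, pol' s a) * (2 * γ * ε / (1 - γ) * DTV pol' pol s) from by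
      rw [Finset.sum_mul, ← Finset.sum_add_distrib]
      exact Finset.sum_congr rfl fun a _ => by ring]
    rw [hpol'1 s, one_mul]
  have hRHS : (∑ s, dFut γ P μ pol s * (∑ a, pol' s a * (Adv γ P C VC s a
        + 2 * γ * ε / (1 - γ) * DTV pol' pol s)))
      = (∑ s, dFut γ P μ pol s * (∑ a, pol' s a * Adv γ P C VC s a))
        + 2 * γ * ε / (1 - γ) * (∑ s, dFut γ P μ pol s * DTV pol' pol s) := by
    calc (∑ s, dFut γ P μ pol s * (∑ a, pol' s a * (Adv γ P C VC s a
          + 2 * γ * ε / (1 - γ) * DTV pol' pol s)))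
        = ∑ s, (dFut γ P μ pol s * (∑ a, pol' s a * Adv γ P C VC s a)
            + 2 * γ * ε / (1 - γ) * (dFut γ P μ pol s * DTV pol' pol s)) := by
          refine Finset.sum_congr rfl fun s _ => ?_
          rw [hinner s]; ring
      _ = _ := by rw [Finset.sum_add_distrib, ← Finset.mul_sum]
  rw [hJ, hRHS]
  refine mul_le_mul_of_nonneg_left hkey ?_
  positivity
end
end

section
/- (CPO Update Worst-Case Constraint Violation.) Let π_k and π_{k+1} be policies with π_k(a|s) > 0 for all s, a, let C_i be an auxiliary cost function, and let d_i ∈ ℝ and δ > 0. Suppose J_{C_i}(π_k) + (1/(1-γ)) E_{s∼d^{π_k}, a∼π_{k+1}(·|s)}[A_{C_i}^{π_k}(s,a)] ≤ d_i and E_{s∼d^{π_k}}[D_KL(π_{k+1}‖π_k)[s]] ≤ δ. Then J_{C_i}(π_{k+1}) ≤ d_i + √(2δ) γ ε_{C_i}^{π_{k+1}} / (1-γ)², where ε_{C_i}^{π_{k+1}} = max_s |E_{a∼π_{k+1}(·|s)}[A_{C_i}^{π_k}(s,a)]|. -/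
open BigOperators Finset Matrix

noncomputable section

variable {S A : Type*}

section AuxPinsker
open Real

-- h(x) = x log x - x + 1 - 3(x-1)^2/(2(x+2))
noncomputable def hfun (x : ℝ) : ℝ := x * Real.log x - x + 1 - 3*(x-1)^2/(2*(x+2))
noncomputable def Hfun (x : ℝ) : ℝ := Real.log x - 3*(x-1)*(x+5)/(2*(x+2)^2)

lemma hasDerivAt_hfun {x : ℝ} (hx : 0 < x) : HasDerivAt hfun (Hfun x) x := by
  have h1 := Real.hasDerivAt_mul_log (ne_of_gt hx)
  have h2 : HasDerivAt (fun y : ℝ => 3*(y-1)^2) (6*(x-1)) x := by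
    have := ((hasDerivAt_id x).sub_const 1).pow 2
    have h3 := this.const_mul (3:ℝ)
    refine h3.congr_deriv ?_; simp; ring
  have h3 : HasDerivAt (fun y : ℝ => 2*(y+2)) 2 x := by
    have := ((hasDerivAt_id x).add_const 2).const_mul (2:ℝ)
    simpa using this
  have hv : 2*(x+2) ≠ 0 := by positivity
  have h4 := h2.div h3 hv
  have h5 := ((h1.sub (hasDerivAt_id x)).add_const 1).sub h4
  refine h5.congr_deriv ?_
  unfold Hfun
  field_simp
  ring

lemma hasDerivAt_Hfun {x : ℝ} (hx : 0 < x) :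
    HasDerivAt Hfun (1/x - 27/(x+2)^3) x := by
  have h1 := Real.hasDerivAt_log (ne_of_gt hx)
  have h2 : HasDerivAt (fun y : ℝ => 3*(y-1)*(y+5)) (3*(2*x+4)) x := by
    have ha : HasDerivAt (fun y : ℝ => 3*(y-1)) 3 x := by
      simpa using ((hasDerivAt_id x).sub_const 1).const_mul (3:ℝ)
    have hb := (hasDerivAt_id x).add_const 5
    have := ha.mul hb
    refine this.congr_deriv ?_; simp; ring
  have h3 : HasDerivAt (fun y : ℝ => 2*(y+2)^2) (4*(x+2)) x := by
    have := (((hasDerivAt_id x).add_const 2).pow 2).const_mul (2:ℝ)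
    refine this.congr_deriv ?_; simp; ring
  have hv : 2*(x+2)^2 ≠ 0 := by positivity
  have h4 := h2.div h3 hv
  have h5 := h1.sub h4
  refine h5.congr_deriv ?_
  have hx2 : (x+2) ≠ 0 := by positivity
  field_simp
  ring

lemma Hfun_one : Hfun 1 = 0 := by simp [Hfun]

lemma hfun_one : hfun 1 = 0 := by norm_num [hfun]

lemma deriv_Hfun_nonneg {x : ℝ} (hx : 0 < x) : 0 ≤ 1/x - 27/(x+2)^3 := by
  rw [sub_nonneg, div_le_div_iff₀ (by positivity) hx]
  nlinarith [sq_nonneg (x-1), mul_nonneg (sq_nonneg (x-1)) (by linarith : (0:ℝ) ≤ x + 8)]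

lemma Hfun_mono : MonotoneOn Hfun (Set.Ioi 0) := by
  have hd : ∀ x ∈ Set.Ioi (0:ℝ), HasDerivAt Hfun (1/x - 27/(x+2)^3) x :=
    fun x hx => hasDerivAt_Hfun hx
  apply monotoneOn_of_deriv_nonneg (convex_Ioi 0)
  · exact fun x hx => (hd x hx).differentiableAt.continuousAt.continuousWithinAt
  · rw [interior_Ioi]; exact fun x hx => (hd x hx).differentiableAt.differentiableWithinAt
  · rw [interior_Ioi]; intro x hx
    rw [(hd x hx).deriv]; exact deriv_Hfun_nonneg hx

lemma hfun_nonneg {x : ℝ} (hx : 0 < x) : 0 ≤ hfun x := by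
  rcases le_total x 1 with hle | hle
  · have hanti : AntitoneOn hfun (Set.Ioc 0 1) := by
      apply antitoneOn_of_deriv_nonpos (convex_Ioc 0 1)
      · exact fun y hy => (hasDerivAt_hfun hy.1).differentiableAt.continuousAt.continuousWithinAt
      · rw [interior_Ioc]
        exact fun y hy => (hasDerivAt_hfun hy.1).differentiableAt.differentiableWithinAt
      · rw [interior_Ioc]; intro y hy
        rw [(hasDerivAt_hfun hy.1).deriv]
        have := Hfun_mono (Set.mem_Ioi.2 hy.1) (Set.mem_Ioi.2 one_pos) hy.2.le
        rw [Hfun_one] at this; exact this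
    have := hanti (Set.mem_Ioc.2 ⟨hx, hle⟩) (Set.mem_Ioc.2 ⟨one_pos, le_refl 1⟩) hle
    rwa [hfun_one] at this
  · have hmono : MonotoneOn hfun (Set.Ici 1) := by
      apply monotoneOn_of_deriv_nonneg (convex_Ici 1)
      · exact fun y hy => (hasDerivAt_hfun (lt_of_lt_of_le one_pos hy)).differentiableAt.continuousAt.continuousWithinAt
      · rw [interior_Ici]
        exact fun y hy => (hasDerivAt_hfun (lt_trans one_pos hy)).differentiableAt.differentiableWithinAt
      · rw [interior_Ici]; intro y hy
        rw [(hasDerivAt_hfun (lt_trans one_pos hy)).deriv]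
        have := Hfun_mono (Set.mem_Ioi.2 one_pos) (Set.mem_Ioi.2 (lt_trans one_pos hy)) hy.le
        rw [Hfun_one] at this; exact this
    have := hmono (Set.mem_Ici.2 (le_refl 1)) (Set.mem_Ici.2 hle) hle
    rwa [hfun_one] at this

lemma pointwise_kl (p q : ℝ) (hp : 0 ≤ p) (hq : 0 < q) :
    p - q + 3*(p-q)^2/(2*(p+2*q)) ≤ p * Real.log (p/q) := by
  rcases hp.eq_or_lt with h0 | hp'
  · rw [← h0]
    have : 3*(0-q)^2/(2*(0+2*q)) = 3*q/4 := by field_simp; ring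
    rw [this]
    simp
    linarith
  · have hx : 0 < p / q := div_pos hp' hq
    have key := hfun_nonneg hx
    unfold hfun at key
    have hq' : q ≠ 0 := ne_of_gt hq
    have hd : 0 < p + 2*q := by linarith
    have key2 : 0 ≤ q * (p/q * Real.log (p/q) - p/q + 1 - 3*(p/q-1)^2/(2*(p/q+2))) :=
      mul_nonneg hq.le key
    have e1 : q * (p/q * Real.log (p/q) - p/q + 1 - 3*(p/q-1)^2/(2*(p/q+2)))
        = p * Real.log (p/q) - p + q - 3*(p-q)^2/(2*(p+2*q)) := by
      field_simp
    rw [e1] at key2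
    linarith


lemma pinsker_sum {A : Type*} [Fintype A] (p q : A → ℝ)
    (hp : ∀ a, 0 ≤ p a) (hq : ∀ a, 0 < q a)
    (hp1 : ∑ a, p a = 1) (hq1 : ∑ a, q a = 1) :
    (∑ a, |p a - q a|)^2 ≤ 2 * ∑ a, p a * Real.log (p a / q a) := by
  set Ssum := ∑ a, (p a - q a)^2 / (p a + 2 * q a) with hS
  have hden : ∀ a, 0 < p a + 2 * q a := fun a => by have := hp a; have := hq a; linarith
  -- KL ≥ (3/2) S
  have h1 : (3/2) * Ssum ≤ ∑ a, p a * Real.log (p a / q a) := by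
    have : ∀ a : A, p a - q a + 3*(p a - q a)^2/(2*(p a + 2*q a)) ≤ p a * Real.log (p a / q a) :=
      fun a => pointwise_kl _ _ (hp a) (hq a)
    have hsum := Finset.sum_le_sum (s := Finset.univ) (fun a _ => this a)
    rw [Finset.sum_add_distrib, Finset.sum_sub_distrib, hp1, hq1] at hsum
    have e : ∑ a, 3*(p a - q a)^2/(2*(p a + 2*q a)) = (3/2) * Ssum := by
      rw [hS, Finset.mul_sum]
      apply Finset.sum_congr rfl
      intro a _
      field_simp
    rw [e] at hsum
    linarith
  -- (∑|p-q|)² ≤ 3 S by Cauchy-Schwarz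
  have h2 : (∑ a, |p a - q a|)^2 ≤ 3 * Ssum := by
    have cs := Finset.sum_mul_sq_le_sq_mul_sq Finset.univ
      (fun a => |p a - q a| / Real.sqrt (p a + 2 * q a))
      (fun a => Real.sqrt (p a + 2 * q a))
    have e1 : ∀ a : A, |p a - q a| / Real.sqrt (p a + 2 * q a) * Real.sqrt (p a + 2 * q a)
        = |p a - q a| := by
      intro a
      rw [div_mul_cancel₀]
      exact Real.sqrt_ne_zero'.2 (hden a)
    have e2 : ∀ a : A, (|p a - q a| / Real.sqrt (p a + 2 * q a))^2
        = (p a - q a)^2 / (p a + 2 * q a) := by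
      intro a
      rw [div_pow, sq_abs, Real.sq_sqrt (hden a).le]
    have e3 : ∀ a : A, (Real.sqrt (p a + 2 * q a))^2 = p a + 2 * q a := fun a =>
      Real.sq_sqrt (hden a).le
    simp only [e1, e2, e3] at cs
    have e4 : ∑ a, (p a + 2 * q a) = 3 := by
      rw [Finset.sum_add_distrib, hp1, ← Finset.mul_sum, hq1]; norm_num
    rw [e4] at cs
    calc (∑ a, |p a - q a|)^2 ≤ Ssum * 3 := cs
    _ = 3 * Ssum := by ring
  linarith

end AuxPinsker

section
variable {S : Type*} [Fintype S] [DecidableEq S]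

lemma colStoch_pow (M : Matrix S S ℝ) (h0 : ∀ i j, 0 ≤ M i j)
    (h1 : ∀ j, ∑ i, M i j = 1) (t : ℕ) :
    (∀ i j, 0 ≤ (M ^ t) i j) ∧ (∀ j, ∑ i, (M ^ t) i j = 1) := by
  induction t with
  | zero =>
    constructor
    · intro i j; simp [Matrix.one_apply]; positivity
    · intro j; simp [Matrix.one_apply]
  | succ n ih =>
    rw [pow_succ]
    constructor
    · intro i j
      rw [Matrix.mul_apply]
      exact Finset.sum_nonneg fun k _ => mul_nonneg (ih.1 i k) (h0 k j)
    · intro j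
      simp only [Matrix.mul_apply]
      rw [Finset.sum_comm]
      have : ∀ k : S, ∑ i, (M ^ n) i k * M k j = M k j := by
        intro k; rw [← Finset.sum_mul, ih.2 k, one_mul]
      simp only [this]
      exact h1 j

lemma mulVec_sum (M : Matrix S S ℝ) (v : S → ℝ) :
    ∑ i, (M *ᵥ v) i = ∑ j, (∑ i, M i j) * v j := by
  simp only [Matrix.mulVec, dotProduct]
  rw [Finset.sum_comm]
  simp [Finset.sum_mul]

lemma abs_mulVec_sum_le (M : Matrix S S ℝ) (v : S → ℝ) (h0 : ∀ i j, 0 ≤ M i j)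
    (h1 : ∀ j, ∑ i, M i j = 1) :
    ∑ i, |(M *ᵥ v) i| ≤ ∑ j, |v j| := by
  have step : ∀ i, |(M *ᵥ v) i| ≤ ∑ j, M i j * |v j| := by
    intro i
    calc |(M *ᵥ v) i| ≤ ∑ j, |M i j * v j| := Finset.abs_sum_le_sum_abs _ _
    _ = ∑ j, M i j * |v j| := by
      apply Finset.sum_congr rfl; intro j _; rw [abs_mul, abs_of_nonneg (h0 i j)]
  calc ∑ i, |(M *ᵥ v) i| ≤ ∑ i, ∑ j, M i j * |v j| := Finset.sum_le_sum fun i _ => step i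
  _ = ∑ j, (∑ i, M i j) * |v j| := by rw [Finset.sum_comm]; simp [Finset.sum_mul]
  _ = ∑ j, |v j| := by simp [h1]

end


section
variable {S A : Type*} [Fintype S] [DecidableEq S] [Fintype A]
variable (γ : ℝ) (P : S → A → S → ℝ) (μ : S → ℝ) (pol : S → A → ℝ)

lemma Pmat_nonneg_s5 (hP0 : ∀ s a s', 0 ≤ P s a s') (hpol : ∀ s a, 0 ≤ pol s a) :
    ∀ i j, 0 ≤ Pmat P pol i j :=
  fun i j => Finset.sum_nonneg fun a _ => mul_nonneg (hP0 j a i) (hpol j a)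

lemma Pmat_colsum_s5 (hP1 : ∀ s a, (∑ s', P s a s') = 1) (hpol1 : ∀ s, ∑ a, pol s a = 1) :
    ∀ j, ∑ i, Pmat P pol i j = 1 := by
  intro j
  unfold Pmat
  rw [Finset.sum_comm]
  have : ∀ a, ∑ i, P j a i * pol j a = pol j a := by
    intro a; rw [← Finset.sum_mul, hP1 j a, one_mul]
  simp only [this]
  exact hpol1 j

variable (hγ0 : 0 ≤ γ) (hγ1 : γ < 1)
  (hP0 : ∀ s a s', 0 ≤ P s a s') (hP1 : ∀ s a, (∑ s', P s a s') = 1)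
  (hμ0 : ∀ s, 0 ≤ μ s) (hμ1 : (∑ s, μ s) = 1)
  (hpol0 : ∀ s a, 0 ≤ pol s a) (hpol1 : ∀ s, ∑ a, pol s a = 1)

include hγ0 hγ1 hP0 hP1 hμ0 hμ1 hpol0 hpol1

lemma dFut_term_nonneg : ∀ (t : ℕ) (s : S), 0 ≤ γ ^ t * ((Pmat P pol ^ t) *ᵥ μ) s := by
  intro t s
  have h := colStoch_pow (Pmat P pol) (Pmat_nonneg_s5 P pol hP0 hpol0)
    (Pmat_colsum_s5 P pol hP1 hpol1) t
  exact mul_nonneg (pow_nonneg hγ0 t)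
    (Finset.sum_nonneg fun j _ => mul_nonneg (h.1 s j) (hμ0 j))

lemma dFut_term_le : ∀ (t : ℕ) (s : S), γ ^ t * ((Pmat P pol ^ t) *ᵥ μ) s ≤ γ ^ t := by
  intro t s
  have h := colStoch_pow (Pmat P pol) (Pmat_nonneg_s5 P pol hP0 hpol0)
    (Pmat_colsum_s5 P pol hP1 hpol1) t
  have hsum : ∑ i, ((Pmat P pol ^ t) *ᵥ μ) i = 1 := by
    rw [_root_.mulVec_sum]
    simp only [h.2, one_mul]; exact hμ1
  have hle : ((Pmat P pol ^ t) *ᵥ μ) s ≤ 1 := by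
    rw [← hsum]
    exact Finset.single_le_sum (f := fun i => ((Pmat P pol ^ t) *ᵥ μ) i)
      (fun i _ => Finset.sum_nonneg fun j _ => mul_nonneg (h.1 i j) (hμ0 j))
      (Finset.mem_univ s)
  calc γ ^ t * ((Pmat P pol ^ t) *ᵥ μ) s ≤ γ ^ t * 1 :=
    mul_le_mul_of_nonneg_left hle (pow_nonneg hγ0 t)
  _ = γ ^ t := mul_one _

lemma dFut_summable : ∀ s : S, Summable (fun t : ℕ => γ ^ t * ((Pmat P pol ^ t) *ᵥ μ) s) := by
  intro s
  apply Summable.of_nonneg_of_le (dFut_term_nonneg γ P μ pol hγ0 hγ1 hP0 hP1 hμ0 hμ1 hpol0 hpol1 · s)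
    (dFut_term_le γ P μ pol hγ0 hγ1 hP0 hP1 hμ0 hμ1 hpol0 hpol1 · s)
  exact summable_geometric_of_lt_one hγ0 hγ1

lemma dFut_nonneg_s5 : ∀ s : S, 0 ≤ dFut γ P μ pol s := by
  intro s
  unfold dFut
  apply mul_nonneg (by linarith)
  exact tsum_nonneg fun t => dFut_term_nonneg γ P μ pol hγ0 hγ1 hP0 hP1 hμ0 hμ1 hpol0 hpol1 t s

lemma dFut_sum_one : ∑ s, dFut γ P μ pol s = 1 := by
  unfold dFut
  rw [← Finset.mul_sum]
  rw [← Summable.tsum_finsetSum (fun s _ => dFut_summable γ P μ pol hγ0 hγ1 hP0 hP1 hμ0 hμ1 hpol0 hpol1 s)]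
  have : ∀ t : ℕ, ∑ s, γ ^ t * ((Pmat P pol ^ t) *ᵥ μ) s = γ ^ t := by
    intro t
    rw [← Finset.mul_sum, _root_.mulVec_sum]
    have h := colStoch_pow (Pmat P pol) (Pmat_nonneg_s5 P pol hP0 hpol0)
      (Pmat_colsum_s5 P pol hP1 hpol1) t
    simp only [h.2, one_mul, hμ1, mul_one]
  rw [tsum_congr this, tsum_geometric_of_lt_one hγ0 hγ1]
  exact div_self (by linarith : (1:ℝ)-γ ≠ 0)

lemma dFut_rec_s5 : ∀ s : S,
    dFut γ P μ pol s = (1 - γ) * μ s + γ * (Pmat P pol *ᵥ dFut γ P μ pol) s := by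
  intro s
  have hsumm := dFut_summable γ P μ pol hγ0 hγ1 hP0 hP1 hμ0 hμ1 hpol0 hpol1
  unfold dFut
  rw [Summable.tsum_eq_zero_add (hsumm s)]
  simp only [pow_zero, one_mul, pow_one]
  have e1 : ∀ t : ℕ, γ ^ (t+1) * ((Pmat P pol ^ (t+1)) *ᵥ μ) s
      = γ * ∑ j, Pmat P pol s j * (γ ^ t * ((Pmat P pol ^ t) *ᵥ μ) j) := by
    intro t
    rw [pow_succ' (Pmat P pol) t]
    rw [← Matrix.mulVec_mulVec]
    simp only [Matrix.mulVec, dotProduct]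
    rw [Finset.mul_sum, Finset.mul_sum]
    apply Finset.sum_congr rfl
    intro j _
    ring
  rw [tsum_congr e1]
  rw [tsum_mul_left]
  rw [Summable.tsum_finsetSum (fun j _ => ((hsumm j).mul_left (Pmat P pol s j)))]
  simp only [tsum_mul_left]
  simp only [Matrix.mulVec, dotProduct, Matrix.one_apply]
  rw [Finset.mul_sum, Finset.mul_sum]
  have e2 : ∑ j, (if s = j then 1 else 0 : ℝ) * μ j = μ s := by simp
  rw [e2, mul_add]
  congr 1
  rw [Finset.mul_sum]
  apply Finset.sum_congr rfl
  intro j _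
  ring

end


section
variable {S A : Type*} [Fintype S] [DecidableEq S] [Fintype A]
variable (γ : ℝ) (P : S → A → S → ℝ) (C : S → A → S → ℝ) (μ : S → ℝ) (pol : S → A → ℝ)
  (V : S → ℝ)
variable (hγ0 : 0 ≤ γ) (hγ1 : γ < 1)
  (hP0 : ∀ s a s', 0 ≤ P s a s') (hP1 : ∀ s a, (∑ s', P s a s') = 1)
  (hμ0 : ∀ s, 0 ≤ μ s) (hμ1 : (∑ s, μ s) = 1)
  (hpol0 : ∀ s a, 0 ≤ pol s a) (hpol1 : ∀ s, ∑ a, pol s a = 1)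

-- per-state decomposition of the expected advantage
lemma advbar_eq (s : S) (hpol1 : ∀ s, ∑ a, pol s a = 1) :
    ∑ a, pol s a * Adv γ P C V s a
      = (∑ a, pol s a * (∑ s', P s a s' * C s a s'))
        + γ * (∑ s', Pmat P pol s' s * V s') - V s := by
  unfold Adv
  have e1 : ∀ a, pol s a * ((∑ s', P s a s' * (C s a s' + γ * V s')) - V s)
      = pol s a * (∑ s', P s a s' * C s a s')
        + (∑ s', γ * (P s a s' * pol s a * V s')) - pol s a * V s := by
    intro a
    rw [mul_sub]
    congr 1
    rw [Finset.mul_sum, Finset.mul_sum, ← Finset.sum_add_distrib]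
    apply Finset.sum_congr rfl
    intro s' _
    ring
  simp only [e1]
  rw [Finset.sum_sub_distrib, Finset.sum_add_distrib]
  have hβ : ∑ a, ∑ s', γ * (P s a s' * pol s a * V s')
      = γ * ∑ s', Pmat P pol s' s * V s' := by
    rw [Finset.sum_comm, Finset.mul_sum]
    apply Finset.sum_congr rfl
    intro s' _
    unfold Pmat
    rw [Finset.sum_mul, Finset.mul_sum]
  have hζ : ∑ a, pol s a * V s = V s := by rw [← Finset.sum_mul, hpol1 s, one_mul]
  rw [hβ, hζ]

include hγ0 hγ1 hP0 hP1 hμ0 hμ1 hpol0 hpol1 in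
lemma perf_identity :
    ∑ s, dFut γ P μ pol s * (∑ a, pol s a * Adv γ P C V s a)
      = (1 - γ) * Jret γ P C μ pol - (1 - γ) * ∑ s, μ s * V s := by
  have hrec := dFut_rec_s5 γ P μ pol hγ0 hγ1 hP0 hP1 hμ0 hμ1 hpol0 hpol1
  set d := dFut γ P μ pol with hd
  have e1 : ∀ s ∈ Finset.univ (α := S), d s * (∑ a, pol s a * Adv γ P C V s a)
      = d s * (∑ a, pol s a * (∑ s', P s a s' * C s a s'))
        + γ * (∑ s', Pmat P pol s' s * d s * V s') - d s * V s := by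
    intro s _
    rw [advbar_eq γ P C pol V s hpol1]
    have h2 : d s * (γ * ∑ s', Pmat P pol s' s * V s')
        = γ * ∑ s', Pmat P pol s' s * d s * V s' := by
      rw [Finset.mul_sum, Finset.mul_sum, Finset.mul_sum]
      apply Finset.sum_congr rfl
      intro s' _
      ring
    linear_combination h2
  rw [Finset.sum_congr rfl e1, Finset.sum_sub_distrib, Finset.sum_add_distrib]
  have swap : ∑ s, γ * (∑ s', Pmat P pol s' s * d s * V s')
      = ∑ s', γ * (Pmat P pol *ᵥ d) s' * V s' := by
    rw [← Finset.mul_sum, Finset.sum_comm, Finset.mul_sum]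
    apply Finset.sum_congr rfl
    intro s' _
    simp only [Matrix.mulVec, dotProduct]
    rw [mul_assoc, Finset.sum_mul, Finset.mul_sum]
  rw [swap]
  have hmid : ∀ s' ∈ Finset.univ (α := S),
      γ * (Pmat P pol *ᵥ d) s' * V s' = (d s' - (1 - γ) * μ s') * V s' := by
    intro s' _
    have h3 : γ * (Pmat P pol *ᵥ d) s' = d s' - (1 - γ) * μ s' := by
      have := hrec s'
      linarith
    rw [h3]
  rw [Finset.sum_congr rfl hmid]
  have hsplit : ∑ s', (d s' - (1 - γ) * μ s') * V s'
      = ∑ s', d s' * V s' - (1 - γ) * ∑ s', μ s' * V s' := by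
    rw [Finset.mul_sum, ← Finset.sum_sub_distrib]
    apply Finset.sum_congr rfl
    intro s' _
    ring
  rw [hsplit]
  have hJ : (1 - γ) * Jret γ P C μ pol
      = ∑ s, d s * (∑ a, pol s a * (∑ s', P s a s' * C s a s')) := by
    unfold Jret
    rw [← hd, ← mul_assoc, mul_one_div, div_self (by linarith : (1:ℝ) - γ ≠ 0), one_mul]
  rw [hJ]
  ring
end

/-- **Proposition 2 (CPO update worst-case constraint violation).** If
`J_C(π_k) + (1/(1-γ)) E_{s∼d^{π_k}, a∼π_{k+1}}[A_C^{π_k}(s,a)] ≤ d_i` and the average KL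
divergence is at most `δ`, then `J_C(π_{k+1}) ≤ d_i + √(2δ) γ ε_C^{π_{k+1}} / (1-γ)²`. -/
theorem cpo_update_worst_case_constraint_violation
    [Fintype S] [DecidableEq S] [Nonempty S] [Fintype A] [Nonempty A]
    (γ : ℝ) (hγ0 : 0 ≤ γ) (hγ1 : γ < 1)
    (P : S → A → S → ℝ) (hP0 : ∀ s a s', 0 ≤ P s a s')
    (hP1 : ∀ s a, (∑ s', P s a s') = 1)
    (μ : S → ℝ) (hμ0 : ∀ s, 0 ≤ μ s) (hμ1 : (∑ s, μ s) = 1)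
    (C : S → A → S → ℝ)
    (pk pk1 : S → A → ℝ)
    (hpk0 : ∀ s a, 0 < pk s a) (hpk1 : ∀ s, (∑ a, pk s a) = 1)
    (hpk10 : ∀ s a, 0 ≤ pk1 s a) (hpk11 : ∀ s, (∑ a, pk1 s a) = 1)
    (VC : S → ℝ)
    (hVC : ∀ s, VC s = ∑ a, pk s a * (∑ s', P s a s' * (C s a s' + γ * VC s')))
    (di δ : ℝ) (hδ : 0 < δ)
    (hsurr : Jret γ P C μ pk
        + (1 / (1 - γ)) * ∑ s, dFut γ P μ pk s * (∑ a, pk1 s a * Adv γ P C VC s a)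
      ≤ di)
    (hkl : (∑ s, dFut γ P μ pk s * DKL pk1 pk s) ≤ δ) :
    Jret γ P C μ pk1
      ≤ di + Real.sqrt (2 * δ) * γ * (⨆ t, |∑ a, pk1 t a * Adv γ P C VC t a|)
          / (1 - γ) ^ 2 := by
  have h1γ : (0:ℝ) < 1 - γ := by linarith
  have hpk0' : ∀ s a, 0 ≤ pk s a := fun s a => (hpk0 s a).le
  have hperf1 := perf_identity γ P C μ pk1 VC hγ0 hγ1 hP0 hP1 hμ0 hμ1 hpk10 hpk11
  have hperf0 := perf_identity γ P C μ pk VC hγ0 hγ1 hP0 hP1 hμ0 hμ1 hpk0' hpk1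
  have hdnn := dFut_nonneg_s5 γ P μ pk hγ0 hγ1 hP0 hP1 hμ0 hμ1 hpk0' hpk1
  have hrec := dFut_rec_s5 γ P μ pk hγ0 hγ1 hP0 hP1 hμ0 hμ1 hpk0' hpk1
  have hrec' := dFut_rec_s5 γ P μ pk1 hγ0 hγ1 hP0 hP1 hμ0 hμ1 hpk10 hpk11
  have hdsum1 := dFut_sum_one γ P μ pk hγ0 hγ1 hP0 hP1 hμ0 hμ1 hpk0' hpk1
  set d : S → ℝ := dFut γ P μ pk with hdd
  set d' : S → ℝ := dFut γ P μ pk1 with hdd'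
  set Abar : S → ℝ := fun s => ∑ a, pk1 s a * Adv γ P C VC s a with hAbar
  -- J(pk) = ⟨μ, VC⟩
  have hzero : ∀ s, (∑ a, pk s a * Adv γ P C VC s a) = 0 := by
    intro s
    unfold Adv
    simp only [mul_sub]
    rw [Finset.sum_sub_distrib, ← Finset.sum_mul, hpk1 s, one_mul, ← hVC s, sub_self]
  have hJpk : Jret γ P C μ pk = ∑ s, μ s * VC s := by
    have hz : ∑ s, d s * (∑ a, pk s a * Adv γ P C VC s a) = 0 := by
      simp [hzero]
    rw [hz] at hperf0
    have h2 : (1 - γ) * (Jret γ P C μ pk - ∑ s, μ s * VC s) = 0 := by linarith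
    rcases mul_eq_zero.1 h2 with h | h
    · exact absurd h (by linarith)
    · linarith
  -- surrogate bound, multiplied through by (1 - γ)
  have hsurr' : (1 - γ) * ∑ s, μ s * VC s + ∑ s, d s * Abar s ≤ (1 - γ) * di := by
    have h3 := mul_le_mul_of_nonneg_left hsurr h1γ.le
    rw [mul_add, ← mul_assoc, mul_one_div, div_self (ne_of_gt h1γ), one_mul, hJpk] at h3
    exact h3
  -- performance identity for pk1
  have hJ1 : (1 - γ) * Jret γ P C μ pk1
      = ∑ s, d' s * Abar s + (1 - γ) * ∑ s, μ s * VC s := by linarith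
  -- epsilon facts
  set ε : ℝ := ⨆ t, |∑ a, pk1 t a * Adv γ P C VC t a| with hεdef
  have hBdd : BddAbove (Set.range fun t => |∑ a, pk1 t a * Adv γ P C VC t a|) :=
    Set.Finite.bddAbove (Set.finite_range _)
  have hεle : ∀ s : S, |Abar s| ≤ ε := fun s => le_ciSup hBdd s
  have hε0 : 0 ≤ ε := le_trans (abs_nonneg _) (hεle (Classical.arbitrary S))
  -- recurrence for the difference of state distributions
  have hM'0 := Pmat_nonneg_s5 P pk1 hP0 hpk10
  have hM'1 := Pmat_colsum_s5 P pk1 hP1 hpk11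
  have hΔrec : ∀ s, d' s - d s
      = γ * (∑ j, Pmat P pk1 s j * (d' j - d j))
        + γ * (∑ j, (Pmat P pk1 s j - Pmat P pk s j) * d j) := by
    intro s
    have h1 := hrec s
    have h2 := hrec' s
    simp only [Matrix.mulVec, dotProduct] at h1 h2
    have e : (∑ j, Pmat P pk1 s j * (d' j - d j)) + (∑ j, (Pmat P pk1 s j - Pmat P pk s j) * d j)
        = (∑ j, Pmat P pk1 s j * d' j) - ∑ j, Pmat P pk s j * d j := by
      rw [← Finset.sum_add_distrib, ← Finset.sum_sub_distrib]
      apply Finset.sum_congr rfl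
      intro j _
      ring
    linear_combination h2 - h1 - γ * e
  have hcontr : ∑ s, |∑ j, Pmat P pk1 s j * (d' j - d j)| ≤ ∑ j, |d' j - d j| := by
    have h0 := abs_mulVec_sum_le (Pmat P pk1) (fun j => d' j - d j) hM'0 hM'1
    simpa [Matrix.mulVec, dotProduct] using h0
  -- bound the perturbation term by the total variation
  have hTbound : ∑ s, |∑ j, (Pmat P pk1 s j - Pmat P pk s j) * d j|
      ≤ ∑ j, d j * (∑ a, |pk1 j a - pk j a|) := by
    calc ∑ s, |∑ j, (Pmat P pk1 s j - Pmat P pk s j) * d j|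
        ≤ ∑ s, ∑ j, |Pmat P pk1 s j - Pmat P pk s j| * d j := by
          apply Finset.sum_le_sum
          intro s _
          calc |∑ j, (Pmat P pk1 s j - Pmat P pk s j) * d j|
              ≤ ∑ j, |(Pmat P pk1 s j - Pmat P pk s j) * d j| := Finset.abs_sum_le_sum_abs _ _
            _ = ∑ j, |Pmat P pk1 s j - Pmat P pk s j| * d j := by
                apply Finset.sum_congr rfl
                intro j _
                rw [abs_mul, abs_of_nonneg (hdnn j)]
      _ = ∑ j, (∑ s, |Pmat P pk1 s j - Pmat P pk s j|) * d j := by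
          rw [Finset.sum_comm]
          apply Finset.sum_congr rfl
          intro j _
          rw [Finset.sum_mul]
      _ ≤ ∑ j, (∑ a, |pk1 j a - pk j a|) * d j := by
          apply Finset.sum_le_sum
          intro j _
          apply mul_le_mul_of_nonneg_right _ (hdnn j)
          calc ∑ s, |Pmat P pk1 s j - Pmat P pk s j|
              = ∑ s, |∑ a, P j a s * (pk1 j a - pk j a)| := by
                apply Finset.sum_congr rfl
                intro s _
                congr 1
                unfold Pmat
                rw [← Finset.sum_sub_distrib]
                apply Finset.sum_congr rfl
                intro a _
                ring
            _ ≤ ∑ s, ∑ a, P j a s * |pk1 j a - pk j a| := by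
                apply Finset.sum_le_sum
                intro s _
                calc |∑ a, P j a s * (pk1 j a - pk j a)|
                    ≤ ∑ a, |P j a s * (pk1 j a - pk j a)| := Finset.abs_sum_le_sum_abs _ _
                  _ = ∑ a, P j a s * |pk1 j a - pk j a| := by
                      apply Finset.sum_congr rfl
                      intro a _
                      rw [abs_mul, abs_of_nonneg (hP0 j a s)]
            _ = ∑ a, (∑ s, P j a s) * |pk1 j a - pk j a| := by
                rw [Finset.sum_comm]
                apply Finset.sum_congr rfl
                intro a _
                rw [Finset.sum_mul]
            _ = ∑ a, |pk1 j a - pk j a| := by simp [hP1 j]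
      _ = ∑ j, d j * (∑ a, |pk1 j a - pk j a|) := by
          apply Finset.sum_congr rfl
          intro j _
          ring
  -- the ℓ¹ bound on d' - d
  have hΔ : (1 - γ) * ∑ s, |d' s - d s| ≤ γ * ∑ j, d j * (∑ a, |pk1 j a - pk j a|) := by
    have hper : ∀ s ∈ Finset.univ (α := S), |d' s - d s|
        ≤ γ * |∑ j, Pmat P pk1 s j * (d' j - d j)|
          + γ * |∑ j, (Pmat P pk1 s j - Pmat P pk s j) * d j| := by
      intro s _
      rw [hΔrec s]
      calc |γ * (∑ j, Pmat P pk1 s j * (d' j - d j))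
            + γ * (∑ j, (Pmat P pk1 s j - Pmat P pk s j) * d j)|
          ≤ |γ * (∑ j, Pmat P pk1 s j * (d' j - d j))|
            + |γ * (∑ j, (Pmat P pk1 s j - Pmat P pk s j) * d j)| := abs_add_le _ _
        _ = γ * |∑ j, Pmat P pk1 s j * (d' j - d j)|
            + γ * |∑ j, (Pmat P pk1 s j - Pmat P pk s j) * d j| := by
            rw [abs_mul, abs_mul, abs_of_nonneg hγ0]
    have hsum := Finset.sum_le_sum hper
    rw [Finset.sum_add_distrib, ← Finset.mul_sum, ← Finset.mul_sum] at hsum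
    have m1 := mul_le_mul_of_nonneg_left hcontr hγ0
    have m2 := mul_le_mul_of_nonneg_left hTbound hγ0
    linarith only [hsum, m1, m2]
  -- Pinsker per state
  have hKLnn : ∀ j : S, 0 ≤ DKL pk1 pk j := by
    intro j
    have hkl := pinsker_sum (fun a => pk1 j a) (fun a => pk j a) (hpk10 j) (hpk0 j)
      (hpk11 j) (hpk1 j)
    have : DKL pk1 pk j = ∑ a, pk1 j a * Real.log (pk1 j a / pk j a) := rfl
    rw [this]
    nlinarith [sq_nonneg (∑ a, |pk1 j a - pk j a|)]
  have hpins : ∀ j : S, (∑ a, |pk1 j a - pk j a|) ≤ Real.sqrt (2 * DKL pk1 pk j) := by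
    intro j
    have hkl := pinsker_sum (fun a => pk1 j a) (fun a => pk j a) (hpk10 j) (hpk0 j)
      (hpk11 j) (hpk1 j)
    exact Real.le_sqrt_of_sq_le hkl
  -- Cauchy–Schwarz step
  have hCS : ∑ j, d j * Real.sqrt (2 * DKL pk1 pk j) ≤ Real.sqrt (2 * δ) := by
    have cs := Finset.sum_mul_sq_le_sq_mul_sq Finset.univ (fun j => Real.sqrt (d j))
      (fun j => Real.sqrt (d j) * Real.sqrt (2 * DKL pk1 pk j))
    have e1 : ∀ j : S, Real.sqrt (d j) * (Real.sqrt (d j) * Real.sqrt (2 * DKL pk1 pk j))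
        = d j * Real.sqrt (2 * DKL pk1 pk j) := by
      intro j
      rw [← mul_assoc, Real.mul_self_sqrt (hdnn j)]
    have e2 : ∀ j : S, (Real.sqrt (d j))^2 = d j := fun j => Real.sq_sqrt (hdnn j)
    have e3 : ∀ j : S, (Real.sqrt (d j) * Real.sqrt (2 * DKL pk1 pk j))^2
        = d j * (2 * DKL pk1 pk j) := by
      intro j
      rw [mul_pow, Real.sq_sqrt (hdnn j), Real.sq_sqrt (by linarith [hKLnn j] : 0 ≤ 2 * DKL pk1 pk j)]
    simp only [e1, e2, e3] at cs
    rw [hdsum1, one_mul] at cs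
    have hb : ∑ j, d j * (2 * DKL pk1 pk j) ≤ 2 * δ := by
      have : ∑ j, d j * (2 * DKL pk1 pk j) = 2 * ∑ j, d j * DKL pk1 pk j := by
        rw [Finset.mul_sum]
        apply Finset.sum_congr rfl
        intro j _
        ring
      rw [this]
      linarith [hkl]
    apply Real.le_sqrt_of_sq_le
    calc (∑ j, d j * Real.sqrt (2 * DKL pk1 pk j))^2 ≤ ∑ j, d j * (2 * DKL pk1 pk j) := cs
      _ ≤ 2 * δ := hb
  have hfinal1 : ∑ j, d j * (∑ a, |pk1 j a - pk j a|) ≤ Real.sqrt (2 * δ) := by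
    refine le_trans (Finset.sum_le_sum fun j _ => ?_) hCS
    exact mul_le_mul_of_nonneg_left (hpins j) (hdnn j)
  have hΔfin : (1 - γ) * ∑ s, |d' s - d s| ≤ γ * Real.sqrt (2 * δ) :=
    hΔ.trans (mul_le_mul_of_nonneg_left hfinal1 hγ0)
  -- pairing bound
  have hpair : ∑ s, d' s * Abar s - ∑ s, d s * Abar s ≤ ε * ∑ s, |d' s - d s| := by
    rw [← Finset.sum_sub_distrib, Finset.mul_sum]
    apply Finset.sum_le_sum
    intro s _
    calc d' s * Abar s - d s * Abar s = (d' s - d s) * Abar s := by ring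
      _ ≤ |(d' s - d s) * Abar s| := le_abs_self _
      _ = |d' s - d s| * |Abar s| := abs_mul _ _
      _ ≤ |d' s - d s| * ε := mul_le_mul_of_nonneg_left (hεle s) (abs_nonneg _)
      _ = ε * |d' s - d s| := mul_comm _ _
  -- final assembly
  have step1 : (1 - γ) * Jret γ P C μ pk1 ≤ (1 - γ) * di + ε * ∑ s, |d' s - d s| := by
    linarith
  have step2 := mul_le_mul_of_nonneg_left step1 h1γ.le
  have step3 := mul_le_mul_of_nonneg_left hΔfin hε0
  have key : (1 - γ)^2 * Jret γ P C μ pk1 ≤ (1 - γ)^2 * di + Real.sqrt (2 * δ) * γ * ε := by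
    linarith only [step2, step3]
  have hfin : Jret γ P C μ pk1 - di ≤ Real.sqrt (2 * δ) * γ * ε / (1 - γ)^2 := by
    rw [le_div_iff₀ (by positivity)]
    linarith only [key]
  linarith
end
end
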